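/- Let Q be a finite quiver without sources. The projective Leavitt complex P•, with its left A = kQ/J²-module structure and right B = L_k(Q^op)-module structure, satisfies δ^{l+ε}(x ζ_{(p,q)} · b) = δ^l(x ζ_{(p,q)}) · b for every homogeneous generator b ∈ {e_j, β^op, (β^op)*} of degree ε ∈ {0, 1, −1}; hence P• is a dg A-B-bimodule, where B is graded by path length with trivial differential and A is concentrated in degree zero. -/

import Mathlib

noncomputable section

/-- A finite quiver: finite sets of vertices and arrows, with source and target maps. -/
structure FQ where
  V : Type
  E : Type
  [fV : Fintype V]
  [fE : Fintype E]
  [dV : DecidableEq V]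
  [dE : DecidableEq E]
  s : E → V
  t : E → V

attribute [instance] FQ.fV FQ.fE FQ.dV FQ.dE

/-- `Q` has no sources: every vertex admits an arrow terminating at it. -/
def FQ.NoSources (Q : FQ) : Prop := ∀ i : Q.V, ∃ e : Q.E, Q.t e = i

/-- The opposite quiver. -/
def FQ.op (Q : FQ) : FQ := { V := Q.V, E := Q.E, s := Q.t, t := Q.s }

/-- Paths in the quiver `Q` from a vertex to a vertex; `cons p e he` is the path
`e ∘ p` obtained by composing an arrow `e` after the path `p` (paths are written
from right to left). -/
inductive QP (Q : FQ) : Q.V → Q.V → Type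
  | nil (i : Q.V) : QP Q i i
  | cons {i j : Q.V} (p : QP Q i j) (e : Q.E) (he : Q.s e = j) : QP Q i (Q.t e)

namespace QP

variable {Q : FQ}

/-- The length of a path. -/
def length : ∀ {i j : Q.V}, QP Q i j → ℕ
  | _, _, .nil _ => 0
  | _, _, .cons p _ _ => length p + 1

/-- The first (rightmost) arrow of a path, if any. -/
def firstArrow : ∀ {i j : Q.V}, QP Q i j → Option Q.E
  | _, _, .nil _ => none
  | _, _, .cons p e _ => some ((firstArrow p).getD e)

/-- The last (leftmost) arrow of a path, if any. -/
def lastArrow : ∀ {i j : Q.V}, QP Q i j → Option Q.E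
  | _, _, .nil _ => none
  | _, _, .cons _ e _ => some e

/-- Transport of a path along an equality of its starting vertices. -/
def castSrc {i i' j : Q.V} (h : i = i') (p : QP Q i j) : QP Q i' j := h ▸ p

/-- Extend a path at its starting vertex by an arrow (`p ↦ p ∘ e`). -/
def preCons (e : Q.E) : ∀ {j : Q.V}, QP Q (Q.t e) j → QP Q (Q.s e) j
  | _, .nil _ => .cons (.nil (Q.s e)) e rfl
  | _, .cons p f hf => .cons (preCons e p) f hf

lemma length_castSrc {i i' j : Q.V} (h : i = i') (p : QP Q i j) :
    (castSrc h p).length = p.length := by subst h; rfl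

lemma length_preCons (e : Q.E) : ∀ {j : Q.V} (p : QP Q (Q.t e) j),
    (preCons e p).length = p.length + 1
  | _, .nil _ => by simp [preCons, length]
  | _, .cons p f hf => by
      show (QP.cons (preCons e p) f hf).length = _
      simp [length, length_preCons e p]

end QP

/-- With respect to a choice `asc` of an *associated* arrow terminating at each
non-source vertex, `IsAssoc Q asc a` says that the arrow `a` is the associated arrow
terminating at its target. -/
def IsAssoc (Q : FQ) (asc : ∀ i : Q.V, (∃ e, Q.t e = i) → Q.E) (a : Q.E) : Prop :=
  asc (Q.t a) ⟨a, rfl⟩ = a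

/-- `(p, q)` is an *associated pair*: the paths `p` and `q` start at the same vertex,
and either one of them is trivial, or their first arrows differ, or their common first
arrow is not associated. -/
def AssocPair (Q : FQ) (asc : ∀ i : Q.V, (∃ e, Q.t e = i) → Q.E)
    {i j j' : Q.V} (p : QP Q i j) (q : QP Q i j') : Prop :=
  ∀ a : Q.E, p.firstArrow = some a → q.firstArrow = some a → ¬ IsAssoc Q asc a

lemma assocPair_nil_left {Q : FQ} {asc : ∀ i : Q.V, (∃ e, Q.t e = i) → Q.E}
    {i j : Q.V} (q : QP Q i j) : AssocPair Q asc (QP.nil i) q := by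
  intro a h
  simp [QP.firstArrow] at h

lemma assocPair_nil_right {Q : FQ} {asc : ∀ i : Q.V, (∃ e, Q.t e = i) → Q.E}
    {i j : Q.V} (p : QP Q i j) : AssocPair Q asc p (QP.nil i) := by
  intro a _ h
  simp [QP.firstArrow] at h

/-- The index set `Λ^l_i` (for `i = x.i`): associated pairs `(p, q)` with
`t(p) = i` and `l(q) - l(p) = l`. -/
structure Lam (Q : FQ) (asc : ∀ i : Q.V, (∃ e, Q.t e = i) → Q.E) (l : ℤ) where
  a : Q.V              -- the common starting vertex of `p` and `q`
  i : Q.V              -- the terminating vertex of `p`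
  b : Q.V              -- the terminating vertex of `q`
  p : QP Q a i
  q : QP Q a b
  ok : AssocPair Q asc p q
  deg : (q.length : ℤ) - (p.length : ℤ) = l

instance {Q : FQ} {asc : ∀ i : Q.V, (∃ e, Q.t e = i) → Q.E} {l : ℤ} :
    DecidableEq (Lam Q asc l) := Classical.decEq _
/-- Generators of the path algebra `kQ`. -/
inductive AGen (Q : FQ)
  | vtx (i : Q.V)
  | ar (e : Q.E)

/-- The defining relations of the radical square zero algebra `A = kQ/J²`:
the trivial paths are orthogonal idempotents summing to the unit, arrows are unital
with respect to the trivial paths at their endpoints, and any product of two arrows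
vanishes. -/
inductive ARel (k : Type) [Field k] (Q : FQ) :
    FreeAlgebra k (AGen Q) → FreeAlgebra k (AGen Q) → Prop
  | vtx_mul (i j : Q.V) :
      ARel k Q (FreeAlgebra.ι k (AGen.vtx i) * FreeAlgebra.ι k (AGen.vtx j))
        (if i = j then FreeAlgebra.ι k (AGen.vtx i) else 0)
  | sum_vtx : ARel k Q (∑ i : Q.V, FreeAlgebra.ι k (AGen.vtx i)) 1
  | vtx_ar (e : Q.E) :
      ARel k Q (FreeAlgebra.ι k (AGen.vtx (Q.t e)) * FreeAlgebra.ι k (AGen.ar e))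
        (FreeAlgebra.ι k (AGen.ar e))
  | ar_vtx (e : Q.E) :
      ARel k Q (FreeAlgebra.ι k (AGen.ar e) * FreeAlgebra.ι k (AGen.vtx (Q.s e)))
        (FreeAlgebra.ι k (AGen.ar e))
  | rad_sq (e f : Q.E) :
      ARel k Q (FreeAlgebra.ι k (AGen.ar e) * FreeAlgebra.ι k (AGen.ar f)) 0

/-- The radical square zero algebra `A = kQ/J²` of the finite quiver `Q`. -/
abbrev AlgA (k : Type) [Field k] (Q : FQ) := RingQuot (ARel k Q)

/-- The image `e_i` in `A` of the trivial path at the vertex `i`. -/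
def vtxA (k : Type) [Field k] (Q : FQ) (i : Q.V) : AlgA k Q :=
  RingQuot.mkAlgHom k (ARel k Q) (FreeAlgebra.ι k (AGen.vtx i))

/-- The image `α` in `A` of an arrow `α`. -/
def arA (k : Type) [Field k] (Q : FQ) (e : Q.E) : AlgA k Q :=
  RingQuot.mkAlgHom k (ARel k Q) (FreeAlgebra.ι k (AGen.ar e))

lemma arA_mul_vtxA (k : Type) [Field k] (Q : FQ) (e : Q.E) :
    arA k Q e * vtxA k Q (Q.s e) = arA k Q e := by
  have h := RingQuot.mkAlgHom_rel k (ARel.ar_vtx (k := k) (Q := Q) e)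
  simpa [vtxA, arA, map_mul] using h

/-- The indecomposable projective left `A`-module `P_i = A e_i`. -/
def Pmod (k : Type) [Field k] (Q : FQ) (i : Q.V) : Submodule (AlgA k Q) (AlgA k Q) :=
  Submodule.span (AlgA k Q) {vtxA k Q i}

lemma vtxA_mem (k : Type) [Field k] (Q : FQ) (i : Q.V) : vtxA k Q i ∈ Pmod k Q i :=
  Submodule.mem_span_singleton_self _

lemma arA_mem (k : Type) [Field k] (Q : FQ) (e : Q.E) {i : Q.V} (he : Q.s e = i) :
    arA k Q e ∈ Pmod k Q i := by
  subst he
  rw [← arA_mul_vtxA k Q e]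
  simpa [smul_eq_mul] using
    Submodule.smul_mem (Pmod k Q (Q.s e)) (arA k Q e) (vtxA_mem k Q (Q.s e))

/-- The `l`-th component `P^l = ⊕_{i ∈ Q₀} P_i^{(Λ^l_i)}` of the projective Leavitt
complex. -/
abbrev PL (k : Type) [Field k] (Q : FQ) (asc : ∀ i : Q.V, (∃ e, Q.t e = i) → Q.E)
    (l : ℤ) : Type :=
  Π₀ x : Lam Q asc l, ↥(Pmod k Q x.i)

instance PL.instAddCommGroup (k : Type) [Field k] (Q : FQ)
    (asc : ∀ i : Q.V, (∃ e, Q.t e = i) → Q.E) (l : ℤ) :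
    AddCommGroup (PL k Q asc l) :=
  @DFinsupp.addCommGroup (Lam Q asc l) (fun x => ↥(Pmod k Q x.i)) (fun _ => inferInstance)
/-- The basis element `e_i ζ_{(p,q)}` of `P^l`, for `x = (p, q) ∈ Λ^l_i`. -/
def zE {k : Type} [Field k] {Q : FQ} {asc : ∀ i : Q.V, (∃ e, Q.t e = i) → Q.E}
    {l : ℤ} (x : Lam Q asc l) : PL k Q asc l :=
  DFinsupp.single x ⟨vtxA k Q x.i, vtxA_mem k Q x.i⟩

/-- The basis element `α ζ_{(p,q)}` of `P^l`, for `x = (p, q) ∈ Λ^l_i` and an arrow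
`α` with `s(α) = i`. -/
def zA {k : Type} [Field k] {Q : FQ} {asc : ∀ i : Q.V, (∃ e, Q.t e = i) → Q.E}
    {l : ℤ} (x : Lam Q asc l) (e : Q.E) (he : Q.s e = x.i) : PL k Q asc l :=
  DFinsupp.single x ⟨arA k Q e, arA_mem k Q e he⟩

/-- The family of `A`-linear maps `δ^l : P^l → P^{l+1}` is *the differential of the
projective Leavitt complex* when it satisfies the defining formulas:
`δ^l(α ζ_{(p,q)}) = 0`; `δ^l(e_i ζ_{(βp̂, q)}) = β ζ_{(p̂, q)}`; and
`δ^l(e_i ζ_{(e_i, q)}) = ∑_{β : t(β) = i} β ζ_{(e_{s(β)}, qβ)}`. -/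
def IsLeavittDiff (k : Type) [Field k] (Q : FQ)
    (asc : ∀ i : Q.V, (∃ e, Q.t e = i) → Q.E)
    (δ : ∀ l : ℤ, PL k Q asc l →ₗ[AlgA k Q] PL k Q asc (l + 1)) : Prop :=
  (∀ (l : ℤ) (x : Lam Q asc l) (e : Q.E) (he : Q.s e = x.i), δ l (zA x e he) = 0) ∧
  (∀ (l : ℤ) (a j b : Q.V) (p' : QP Q a j) (e : Q.E) (he : Q.s e = j) (q : QP Q a b)
      (ok : AssocPair Q asc (QP.cons p' e he) q)
      (dg : (q.length : ℤ) - ((QP.cons p' e he).length : ℤ) = l)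
      (ok' : AssocPair Q asc p' q)
      (dg' : (q.length : ℤ) - (p'.length : ℤ) = l + 1),
      δ l (zE ⟨a, Q.t e, b, QP.cons p' e he, q, ok, dg⟩) =
        zA (⟨a, j, b, p', q, ok', dg'⟩ : Lam Q asc (l + 1)) e he) ∧
  (∀ (l : ℤ) (a b : Q.V) (q : QP Q a b)
      (ok : AssocPair Q asc (QP.nil a) q)
      (dg : (q.length : ℤ) - ((QP.nil a).length : ℤ) = l),
      δ l (zE ⟨a, a, b, QP.nil a, q, ok, dg⟩) =
        ∑ e : {e : Q.E // Q.t e = a},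
          zA (⟨Q.s e.1, Q.s e.1, b, QP.nil (Q.s e.1),
                QP.preCons e.1 (QP.castSrc e.2.symm q),
                assocPair_nil_left _,
                by
                  simp only [QP.length_preCons, QP.length_castSrc, QP.length] at *
                  push_cast
                  omega⟩ : Lam Q asc (l + 1)) e.1 rfl)
/-- The total module `⊕_{l ∈ ℤ} P^l` underlying the projective Leavitt complex. -/
abbrev PT (k : Type) [Field k] (Q : FQ)
    (asc : ∀ i : Q.V, (∃ e, Q.t e = i) → Q.E) : Type :=
  Π₀ l : ℤ, PL k Q asc l

instance PT.instAddCommGroup (k : Type) [Field k] (Q : FQ)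
    (asc : ∀ i : Q.V, (∃ e, Q.t e = i) → Q.E) : AddCommGroup (PT k Q asc) :=
  @DFinsupp.addCommGroup ℤ (fun l => PL k Q asc l) (fun _ => inferInstance)

/-- The element `x ζ_{(p,q)}` of `⊕_{l} P^l` in degree `l`, for `(p,q) ∈ Λ^l_i` and
`x = u ∈ P_i`. -/
def emb {k : Type} [Field k] {Q : FQ} {asc : ∀ i : Q.V, (∃ e, Q.t e = i) → Q.E}
    (l : ℤ) (x : Lam Q asc l) (u : ↥(Pmod k Q x.i)) : PT k Q asc :=
  DFinsupp.single l (DFinsupp.single x u)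

/-- The defining formulas (4.2)–(4.4) for the right action of the generators of the
Leavitt path algebra `B = L_k(Q^op)` on the projective Leavitt complex:
`Tv j` is the action of `e_j`, `Ta α` the action of `α^op`, and `Ts α` the action of
`(α^op)*`.  Explicitly, on `x ζ_{(p,q)}`:
* `x ζ_{(p,q)} · e_j = δ_{j,t(q)} x ζ_{(p,q)}`;
* `x ζ_{(p,q)} · α^op = x ζ_{(p̃, e_{t(α)})} - ∑_{β ∈ T(α)} x ζ_{(p̃β, β)}` if
  `l(q) = 0`, `p = p̃α` and `α` is associated, and `δ_{s(α),t(q)} x ζ_{(p, αq)}`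
  otherwise;
* `x ζ_{(p,q)} · (α^op)* = δ_{α,α₁} x ζ_{(p, q̂)}` if `q = α₁ q̂`, and
  `δ_{s(p),t(α)} x ζ_{(pα, e_{s(α)})}` if `l(q) = 0`. -/
structure ActionFormulas (k : Type) [Field k] (Q : FQ)
    (asc : ∀ i : Q.V, (∃ e, Q.t e = i) → Q.E)
    (Tv : Q.V → PT k Q asc → PT k Q asc)
    (Ta Ts : Q.E → PT k Q asc → PT k Q asc) : Prop where
  fv : ∀ (j : Q.V) (l : ℤ) (x : Lam Q asc l) (u : ↥(Pmod k Q x.i)),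
    Tv j (emb l x u) = if x.b = j then emb l x u else 0
  fa_assoc : ∀ (α : Q.E) (_hα : IsAssoc Q asc α) (j : Q.V) (pt : QP Q (Q.t α) j)
    (ok : AssocPair Q asc (QP.preCons α pt) (QP.nil (Q.s α))) (l : ℤ)
    (dg : (((QP.nil (Q.s α)).length : ℤ)) - (((QP.preCons α pt).length : ℤ)) = l)
    (ok1 : AssocPair Q asc pt (QP.nil (Q.t α)))
    (dg1 : (((QP.nil (Q.t α)).length : ℤ)) - ((pt.length : ℤ)) = l + 1)
    (okb : ∀ b : {b : Q.E // Q.t b = Q.t α ∧ b ≠ α},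
      AssocPair Q asc (QP.preCons b.1 (QP.castSrc b.2.1.symm pt))
        (QP.cons (QP.nil (Q.s b.1)) b.1 rfl))
    (dgb : ∀ b : {b : Q.E // Q.t b = Q.t α ∧ b ≠ α},
      (((QP.cons (QP.nil (Q.s b.1)) b.1 rfl).length : ℤ)) -
        (((QP.preCons b.1 (QP.castSrc b.2.1.symm pt)).length : ℤ)) = l + 1)
    (u : ↥(Pmod k Q j)),
    Ta α (emb l ⟨Q.s α, j, Q.s α, QP.preCons α pt, QP.nil (Q.s α), ok, dg⟩ u) =
      emb (l + 1) ⟨Q.t α, j, Q.t α, pt, QP.nil (Q.t α), ok1, dg1⟩ u -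
      ∑ b : {b : Q.E // Q.t b = Q.t α ∧ b ≠ α},
        emb (l + 1) ⟨Q.s b.1, j, Q.t b.1, QP.preCons b.1 (QP.castSrc b.2.1.symm pt),
          QP.cons (QP.nil (Q.s b.1)) b.1 rfl, okb b, dgb b⟩ u
  fa_ext : ∀ (α : Q.E) (l : ℤ) (x : Lam Q asc l) (u : ↥(Pmod k Q x.i))
    (_hcond : ¬(x.q.length = 0 ∧ x.p.firstArrow = some α ∧ IsAssoc Q asc α))
    (h : Q.s α = x.b) (ok' : AssocPair Q asc x.p (QP.cons x.q α h))
    (dg' : (((QP.cons x.q α h).length : ℤ)) - ((x.p.length : ℤ)) = l + 1),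
    Ta α (emb l x u) = emb (l + 1) ⟨x.a, x.i, Q.t α, x.p, QP.cons x.q α h, ok', dg'⟩ u
  fa_zero : ∀ (α : Q.E) (l : ℤ) (x : Lam Q asc l) (u : ↥(Pmod k Q x.i))
    (_hcond : ¬(x.q.length = 0 ∧ x.p.firstArrow = some α ∧ IsAssoc Q asc α))
    (_h : Q.s α ≠ x.b), Ta α (emb l x u) = 0
  fs_top_eq : ∀ (α₁ : Q.E) (l : ℤ) (a i c : Q.V) (p : QP Q a i) (qh : QP Q a c)
    (he : Q.s α₁ = c)
    (ok : AssocPair Q asc p (QP.cons qh α₁ he))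
    (dg : (((QP.cons qh α₁ he).length : ℤ)) - ((p.length : ℤ)) = l)
    (ok' : AssocPair Q asc p qh)
    (dg' : ((qh.length : ℤ)) - ((p.length : ℤ)) = l - 1)
    (u : ↥(Pmod k Q i)),
    Ts α₁ (emb l ⟨a, i, Q.t α₁, p, QP.cons qh α₁ he, ok, dg⟩ u) =
      emb (l - 1) ⟨a, i, c, p, qh, ok', dg'⟩ u
  fs_top_ne : ∀ (α α₁ : Q.E), α ≠ α₁ → ∀ (l : ℤ) (a i c : Q.V) (p : QP Q a i)
    (qh : QP Q a c) (he : Q.s α₁ = c)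
    (ok : AssocPair Q asc p (QP.cons qh α₁ he))
    (dg : (((QP.cons qh α₁ he).length : ℤ)) - ((p.length : ℤ)) = l)
    (u : ↥(Pmod k Q i)),
    Ts α (emb l ⟨a, i, Q.t α₁, p, QP.cons qh α₁ he, ok, dg⟩ u) = 0
  fs_nil_eq : ∀ (α : Q.E) (l : ℤ) (i : Q.V) (p : QP Q (Q.t α) i)
    (ok : AssocPair Q asc p (QP.nil (Q.t α)))
    (dg : (((QP.nil (Q.t α)).length : ℤ)) - ((p.length : ℤ)) = l)
    (ok' : AssocPair Q asc (QP.preCons α p) (QP.nil (Q.s α)))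
    (dg' : (((QP.nil (Q.s α)).length : ℤ)) - (((QP.preCons α p).length : ℤ)) = l - 1)
    (u : ↥(Pmod k Q i)),
    Ts α (emb l ⟨Q.t α, i, Q.t α, p, QP.nil (Q.t α), ok, dg⟩ u) =
      emb (l - 1) ⟨Q.s α, i, Q.s α, QP.preCons α p, QP.nil (Q.s α), ok', dg'⟩ u
  fs_nil_ne : ∀ (α : Q.E) (l : ℤ) (x : Lam Q asc l) (u : ↥(Pmod k Q x.i)),
    x.q.length = 0 → Q.t α ≠ x.a → Ts α (emb l x u) = 0

/-- The element of `Λ⁰_i` given by the pair `(e_i, e_i)` of trivial paths. -/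
def nilLam {Q : FQ} {asc : ∀ i : Q.V, (∃ e, Q.t e = i) → Q.E} (v : Q.V) :
    Lam Q asc 0 :=
  ⟨v, v, v, QP.nil v, QP.nil v, assocPair_nil_left _, by simp [QP.length]⟩

section Helpers

variable {k : Type} [Field k] {Q : FQ} {asc : ∀ i : Q.V, (∃ e, Q.t e = i) → Q.E}

namespace QP

lemma firstArrow_preCons (e : Q.E) : ∀ {j : Q.V} (p : QP Q (Q.t e) j),
    (preCons e p).firstArrow = some e
  | _, .nil _ => by simp [preCons, firstArrow]
  | _, .cons p f hf => by
      show (QP.cons (preCons e p) f hf).firstArrow = some e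
      simp [firstArrow, firstArrow_preCons e p]

lemma castSrc_cons {a a' j : Q.V} (h : a = a') (p : QP Q a j) (e : Q.E) (he : Q.s e = j) :
    castSrc h (cons p e he) = cons (castSrc h p) e he := by subst h; rfl

lemma preCons_cons (e : Q.E) {j : Q.V} (p : QP Q (Q.t e) j) (f : Q.E) (hf : Q.s f = j) :
    preCons e (cons p f hf) = cons (preCons e p) f hf := rfl

lemma preCons_nil (e : Q.E) : preCons e (nil (Q.t e)) = cons (nil (Q.s e)) e rfl := rfl

lemma heq_castSrc {a a' j : Q.V} (h : a = a') (p : QP Q a j) : HEq (castSrc h p) p := by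
  subst h; rfl

lemma preCons_castNil_heq (e : Q.E) {c : Q.V} (h : Q.t e = c) :
    HEq (QP.preCons e (QP.castSrc h.symm (QP.nil c))) (QP.cons (QP.nil (Q.s e)) e rfl) := by
  subst h; rfl

lemma castSrc_self {v j : Q.V} (h : v = v) (p : QP Q v j) : castSrc h p = p := by
  rw [Subsingleton.elim h rfl]
  rfl

lemma cons_decomp : ∀ {a j : Q.V} (p : QP Q a j) (f : Q.E) (hf : Q.s f = j),
    ∃ (γ : Q.E) (h : Q.s γ = a) (pt : QP Q (Q.t γ) (Q.t f)),
      QP.cons p f hf = QP.castSrc h (QP.preCons γ pt)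
  | _, _, .nil a, f, hf => ⟨f, hf, .nil (Q.t f), by subst hf; rfl⟩
  | _, _, .cons p₀ e he, f, hf => by
      obtain ⟨γ, h, pt, hp⟩ := cons_decomp p₀ e he
      exact ⟨γ, h, QP.cons pt f hf, by
        rw [hp]; exact (QP.castSrc_cons h (QP.preCons γ pt) f hf).symm⟩

end QP

lemma assocPair_of_cons_left {a j b : Q.V} {p' : QP Q a j} {e : Q.E} {he : Q.s e = j}
    {q : QP Q a b} (h : AssocPair Q asc (QP.cons p' e he) q) : AssocPair Q asc p' q := by
  intro x hx hq
  exact h x (by simp [QP.firstArrow, hx]) hq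

lemma assocPair_cons_right {a i c : Q.V} {p : QP Q a i} {qh : QP Q a c} {e : Q.E}
    {he : Q.s e = c} (h : AssocPair Q asc p (QP.cons qh e he)) : AssocPair Q asc p qh := by
  intro x hx hq
  exact h x hx (by simp [QP.firstArrow, hq])

lemma assocPair_snoc {a i c : Q.V} {p : QP Q a i} {q0 : QP Q a c} {α₁ : Q.E}
    {he : Q.s α₁ = c} {α : Q.E} {h' : Q.s α = Q.t α₁}
    (h : AssocPair Q asc p (QP.cons q0 α₁ he)) :
    AssocPair Q asc p (QP.cons (QP.cons q0 α₁ he) α h') := by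
  intro x hx hq
  refine h x hx ?_
  simpa [QP.firstArrow] using hq

lemma isAssoc_eq {b α : Q.E} (hb : Q.t b = Q.t α) (h1 : IsAssoc Q asc b)
    (h2 : IsAssoc Q asc α) : b = α := by
  unfold IsAssoc at h1 h2
  have h3 := congrArg (fun v : {v : Q.V // ∃ e, Q.t e = v} => asc v.1 v.2)
    (Subtype.ext hb :
      (⟨Q.t b, ⟨b, rfl⟩⟩ : {v : Q.V // ∃ e, Q.t e = v}) = ⟨Q.t α, ⟨α, rfl⟩⟩)
  simp only at h3
  rw [h1, h2] at h3
  exact h3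

lemma okb_of (α : Q.E) (hα : IsAssoc Q asc α) {j : Q.V} (pt : QP Q (Q.t α) j)
    (b : {b : Q.E // Q.t b = Q.t α ∧ b ≠ α}) :
    AssocPair Q asc (QP.preCons b.1 (QP.castSrc b.2.1.symm pt))
      (QP.cons (QP.nil (Q.s b.1)) b.1 rfl) := by
  intro x hx _ hassoc
  rw [QP.firstArrow_preCons] at hx
  obtain rfl : b.1 = x := by injection hx
  exact b.2.2 (isAssoc_eq b.2.1 hassoc hα)

lemma assocPair_first_notassoc {a i c : Q.V} {p : QP Q a i} {q : QP Q a c} {β : Q.E}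
    (hp : p.firstArrow = some β) (hq : q.firstArrow = some β)
    (hβ : ¬ IsAssoc Q asc β) : AssocPair Q asc p q := by
  intro x hx _ hass
  rw [hp] at hx
  obtain rfl : β = x := by injection hx
  exact hβ hass

lemma notAssoc_of_mem {γ : Q.E} (hγ : IsAssoc Q asc γ)
    (b : {b : Q.E // Q.t b = Q.t γ ∧ b ≠ γ}) : ¬ IsAssoc Q asc b.1 :=
  fun h => b.2.2 (isAssoc_eq b.2.1 h hγ)

lemma hC_len {α : Q.E} (m : ℤ) (x : Lam Q asc m) (hx : x.q.length ≠ 0) :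
    ¬(x.q.length = 0 ∧ x.p.firstArrow = some α ∧ IsAssoc Q asc α) := by
  rintro ⟨h1, -, -⟩
  exact hx h1

lemma hC_nil {α : Q.E} (m : ℤ) (x : Lam Q asc m) (hx : x.p.firstArrow = none) :
    ¬(x.q.length = 0 ∧ x.p.firstArrow = some α ∧ IsAssoc Q asc α) := by
  rintro ⟨-, h2, -⟩
  rw [hx] at h2
  exact Option.some_ne_none _ h2.symm

lemma hC_pre {α γ : Q.E} (hCγ : ¬(γ = α ∧ IsAssoc Q asc α)) (m : ℤ)
    (x : Lam Q asc m) (hx : x.p.firstArrow = some γ) :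
    ¬(x.q.length = 0 ∧ x.p.firstArrow = some α ∧ IsAssoc Q asc α) := by
  rintro ⟨-, h2, h3⟩
  rw [hx] at h2
  exact hCγ ⟨by injection h2, h3⟩

/-- canonical generator of `Pmod i` -/
def V0 (k : Type) [Field k] (Q : FQ) (i : Q.V) : ↥(Pmod k Q i) :=
  ⟨vtxA k Q i, vtxA_mem k Q i⟩

def VA (k : Type) [Field k] (Q : FQ) (e : Q.E) {i : Q.V} (he : Q.s e = i) :
    ↥(Pmod k Q i) := ⟨arA k Q e, arA_mem k Q e he⟩

lemma V0_heq {i i' : Q.V} (h : i = i') : HEq (V0 k Q i) (V0 k Q i') := by subst h; rfl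

lemma VA_heq (e : Q.E) {i i' : Q.V} (h : i = i') (he : Q.s e = i) (he' : Q.s e = i') :
    HEq (VA k Q e he) (VA k Q e he') := by subst h; rfl

lemma emb_congr {l l' : ℤ} (hl : l = l') {a i i' b b' : Q.V} (hi : i = i') (hb : b = b')
    {p : QP Q a i} {p' : QP Q a i'} (hp : HEq p p')
    {q : QP Q a b} {q' : QP Q a b'} (hq : HEq q q')
    {ok : AssocPair Q asc p q} {dg : (q.length : ℤ) - (p.length : ℤ) = l}
    {ok' : AssocPair Q asc p' q'} {dg' : (q'.length : ℤ) - (p'.length : ℤ) = l'}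
    {u : ↥(Pmod k Q i)} {u' : ↥(Pmod k Q i')} (hu : HEq u u') :
    emb l (⟨a, i, b, p, q, ok, dg⟩ : Lam Q asc l) u
      = emb l' (⟨a, i', b', p', q', ok', dg'⟩ : Lam Q asc l') u' := by
  subst hl hi hb
  obtain rfl := eq_of_heq hp
  obtain rfl := eq_of_heq hq
  obtain rfl := eq_of_heq hu
  rfl

lemma single_sum {ι : Type} [Fintype ι] {m : ℤ} (g : ι → PL k Q asc m) :
    DFinsupp.single (β := fun l => PL k Q asc l) m (∑ e, g e)
      = ∑ e, DFinsupp.single m (g e) :=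
  map_sum (DFinsupp.singleAddHom _ m) g Finset.univ

lemma sum_split {M : Type} [AddCommGroup M] (α : Q.E) (f : Q.E → M) :
    ∑ e : {e : Q.E // Q.t e = Q.t α}, f e.1
      = f α + ∑ b : {b : Q.E // Q.t b = Q.t α ∧ b ≠ α}, f b.1 := by
  classical
  have h1 : ∑ e : {e : Q.E // Q.t e = Q.t α}, f e.1
      = ∑ e ∈ Finset.univ.filter (fun e => Q.t e = Q.t α), f e := by
    exact (Finset.sum_subtype _ (fun x => by simp) f).symm
  have h2 : ∑ b : {b : Q.E // Q.t b = Q.t α ∧ b ≠ α}, f b.1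
      = ∑ e ∈ Finset.univ.filter (fun e => Q.t e = Q.t α ∧ e ≠ α), f e := by
    exact (Finset.sum_subtype _ (fun x => by simp) f).symm
  rw [h1, h2]
  have h3 : Finset.univ.filter (fun e => Q.t e = Q.t α)
      = insert α (Finset.univ.filter (fun e => Q.t e = Q.t α ∧ e ≠ α)) := by
    ext e
    simp only [Finset.mem_filter, Finset.mem_univ, true_and, Finset.mem_insert]
    by_cases he : e = α <;> simp [he]
  rw [h3, Finset.sum_insert (by simp)]

lemma sum_split_sub {M : Type} [AddCommGroup M] (γ : Q.E) (f : Q.E → M) :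
    (∑ e : {e : Q.E // Q.t e = Q.t γ}, f e.1)
      - (∑ b : {b : Q.E // Q.t b = Q.t γ ∧ b ≠ γ}, f b.1) = f γ := by
  rw [sum_split γ f, add_sub_cancel_right]

end Helpers
section Reduce
variable {k : Type} [Field k] {Q : FQ} {asc : ∀ i : Q.V, (∃ e, Q.t e = i) → Q.E}

lemma reduce_comm (δ : ∀ l : ℤ, PL k Q asc l →ₗ[AlgA k Q] PL k Q asc (l + 1))
    (δT T : PT k Q asc →ₗ[AlgA k Q] PT k Q asc)
    (hδT : ∀ (l : ℤ) (v : PL k Q asc l),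
      δT (DFinsupp.single l v) = DFinsupp.single (l + 1) (δ l v))
    (h : ∀ (l : ℤ) (x : Lam Q asc l),
      δT (T (emb l x (V0 k Q x.i))) = T (δT (emb l x (V0 k Q x.i)))) :
    δT.comp T = T.comp δT := by
  apply DFinsupp.lhom_ext
  intro l v
  simp only [LinearMap.comp_apply]
  have hsingle : ∀ (x : Lam Q asc l) (u : ↥(Pmod k Q x.i)),
      δT (T (DFinsupp.single l (DFinsupp.single x u)))
        = T (δT (DFinsupp.single l (DFinsupp.single x u))) := by
    intro x u
    obtain ⟨c, hc⟩ := Submodule.mem_span_singleton.mp u.2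
    have hu : u = c • V0 k Q x.i := Subtype.ext hc.symm
    rw [hu, DFinsupp.single_smul, DFinsupp.single_smul, map_smul, map_smul, map_smul,
      map_smul]
    exact congrArg (c • ·) (h l x)
  induction v using DFinsupp.induction with
  | h0 => simp
  | ha x u w _ _ ih =>
      rw [DFinsupp.single_add, map_add, map_add, map_add, map_add, ih, hsingle]


end Reduce
section DLemmas
variable {k : Type} [Field k] {Q : FQ} {asc : ∀ i : Q.V, (∃ e, Q.t e = i) → Q.E}
variable {δ : ∀ l : ℤ, PL k Q asc l →ₗ[AlgA k Q] PL k Q asc (l + 1)}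
variable {δT : PT k Q asc →ₗ[AlgA k Q] PT k Q asc}

lemma D1 (hδT : ∀ (l : ℤ) (v : PL k Q asc l),
      δT (DFinsupp.single l v) = DFinsupp.single (l + 1) (δ l v))
    (hδ : IsLeavittDiff k Q asc δ)
    (m : ℤ) (x : Lam Q asc m) (e : Q.E) (he : Q.s e = x.i) :
    δT (emb m x (VA k Q e he)) = 0 := by
  have h : δT (emb m x (VA k Q e he))
      = DFinsupp.single (m + 1) (δ m (zA x e he)) := hδT m (zA x e he)
  rw [h, hδ.1 m x e he, DFinsupp.single_zero]

lemma D2 (hδT : ∀ (l : ℤ) (v : PL k Q asc l),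
      δT (DFinsupp.single l v) = DFinsupp.single (l + 1) (δ l v))
    (hδ : IsLeavittDiff k Q asc δ)
    (m : ℤ) (a j b : Q.V) (p' : QP Q a j) (e : Q.E) (he : Q.s e = j) (q : QP Q a b)
    (ok : AssocPair Q asc (QP.cons p' e he) q)
    (dg : (q.length : ℤ) - ((QP.cons p' e he).length : ℤ) = m)
    (ok' : AssocPair Q asc p' q)
    (dg' : (q.length : ℤ) - (p'.length : ℤ) = m + 1) :
    δT (emb m (⟨a, Q.t e, b, QP.cons p' e he, q, ok, dg⟩ : Lam Q asc m)
        (V0 k Q (Q.t e)))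
      = emb (m + 1) (⟨a, j, b, p', q, ok', dg'⟩ : Lam Q asc (m + 1)) (VA k Q e he) := by
  have h : δT (emb m (⟨a, Q.t e, b, QP.cons p' e he, q, ok, dg⟩ : Lam Q asc m)
        (V0 k Q (Q.t e)))
      = DFinsupp.single (m + 1) (δ m (zE ⟨a, Q.t e, b, QP.cons p' e he, q, ok, dg⟩)) :=
    hδT m _
  rw [h, hδ.2.1 m a j b p' e he q ok dg ok' dg']
  rfl

lemma D3 (hδT : ∀ (l : ℤ) (v : PL k Q asc l),
      δT (DFinsupp.single l v) = DFinsupp.single (l + 1) (δ l v))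
    (hδ : IsLeavittDiff k Q asc δ)
    (m : ℤ) (a b : Q.V) (q : QP Q a b)
    (ok : AssocPair Q asc (QP.nil a) q)
    (dg : (q.length : ℤ) - ((QP.nil a).length : ℤ) = m)
    (dg' : ∀ e : {e : Q.E // Q.t e = a},
      (((QP.preCons e.1 (QP.castSrc e.2.symm q)).length : ℤ))
        - (((QP.nil (Q.s e.1)).length : ℤ)) = m + 1) :
    δT (emb m (⟨a, a, b, QP.nil a, q, ok, dg⟩ : Lam Q asc m) (V0 k Q a))
      = ∑ e : {e : Q.E // Q.t e = a},
          emb (m + 1) (⟨Q.s e.1, Q.s e.1, b, QP.nil (Q.s e.1),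
              QP.preCons e.1 (QP.castSrc e.2.symm q), assocPair_nil_left _,
              dg' e⟩ : Lam Q asc (m + 1)) (VA k Q e.1 rfl) := by
  have h : δT (emb m (⟨a, a, b, QP.nil a, q, ok, dg⟩ : Lam Q asc m) (V0 k Q a))
      = DFinsupp.single (m + 1) (δ m (zE ⟨a, a, b, QP.nil a, q, ok, dg⟩)) := hδT m _
  rw [h, hδ.2.2 m a b q ok dg, single_sum]
  rfl

end DLemmas
section Comm
variable {k : Type} [Field k] {Q : FQ} {asc : ∀ i : Q.V, (∃ e, Q.t e = i) → Q.E}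
variable {δ : ∀ l : ℤ, PL k Q asc l →ₗ[AlgA k Q] PL k Q asc (l + 1)}
variable {δT : PT k Q asc →ₗ[AlgA k Q] PT k Q asc}
variable {Tv : Q.V → PT k Q asc →ₗ[AlgA k Q] PT k Q asc}
variable {Ta Ts : Q.E → PT k Q asc →ₗ[AlgA k Q] PT k Q asc}

lemma comm_v
    (hδT : ∀ (l : ℤ) (v : PL k Q asc l),
      δT (DFinsupp.single l v) = DFinsupp.single (l + 1) (δ l v))
    (hδ : IsLeavittDiff k Q asc δ)
    (hF : ActionFormulas k Q asc (fun j u => Tv j u) (fun e u => Ta e u)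
      (fun e u => Ts e u))
    (j : Q.V) (l : ℤ) (x : Lam Q asc l) :
    δT (Tv j (emb l x (V0 k Q x.i))) = Tv j (δT (emb l x (V0 k Q x.i))) := by
  obtain ⟨a, i, b, p, q, ok, dg⟩ := x
  cases p with
  | nil =>
      have dg' : ∀ e : {e : Q.E // Q.t e = a},
          (((QP.preCons e.1 (QP.castSrc e.2.symm q)).length : ℤ))
            - (((QP.nil (Q.s e.1)).length : ℤ)) = l + 1 := by
        intro e
        simp only [QP.length_preCons, QP.length_castSrc, QP.length] at dg ⊢
        push_cast at dg ⊢
        omega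
      rw [D3 hδT hδ l a b q ok dg dg', map_sum]
      simp only [hF.fv]
      by_cases hbj : b = j
      · simp only [if_pos hbj]
        rw [D3 hδT hδ l a b q ok dg dg']
      · simp only [if_neg hbj, map_zero]
        simp
  | cons p' f hf =>
      have ok' : AssocPair Q asc p' q := assocPair_of_cons_left ok
      have dg1 : (q.length : ℤ) - (p'.length : ℤ) = l + 1 := by
        simp only [QP.length] at dg ⊢
        push_cast at dg ⊢
        omega
      rw [D2 hδT hδ l a _ b p' f hf q ok dg ok' dg1]
      simp only [hF.fv]
      by_cases hbj : b = j
      · simp only [if_pos hbj]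
        rw [D2 hδT hδ l a _ b p' f hf q ok dg ok' dg1]
      · simp only [if_neg hbj, map_zero]

end Comm
section CommS
variable {k : Type} [Field k] {Q : FQ} {asc : ∀ i : Q.V, (∃ e, Q.t e = i) → Q.E}
variable {δ : ∀ l : ℤ, PL k Q asc l →ₗ[AlgA k Q] PL k Q asc (l + 1)}
variable {δT : PT k Q asc →ₗ[AlgA k Q] PT k Q asc}
variable {Tv : Q.V → PT k Q asc →ₗ[AlgA k Q] PT k Q asc}
variable {Ta Ts : Q.E → PT k Q asc →ₗ[AlgA k Q] PT k Q asc}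

lemma comm_s
    (hδT : ∀ (l : ℤ) (v : PL k Q asc l),
      δT (DFinsupp.single l v) = DFinsupp.single (l + 1) (δ l v))
    (hδ : IsLeavittDiff k Q asc δ)
    (hF : ActionFormulas k Q asc (fun j u => Tv j u) (fun e u => Ta e u)
      (fun e u => Ts e u))
    (α : Q.E) (l : ℤ) (x : Lam Q asc l) :
    δT (Ts α (emb l x (V0 k Q x.i))) = Ts α (δT (emb l x (V0 k Q x.i))) := by
  obtain ⟨a, i, b, p, q, ok, dg⟩ := x
  cases q with
  | cons qh α₁ he =>
    by_cases haa : α = α₁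
    · subst haa
      have ok' : AssocPair Q asc p qh := assocPair_cons_right ok
      have dg' : (qh.length : ℤ) - (p.length : ℤ) = l - 1 := by
        simp only [QP.length] at dg ⊢; push_cast at dg ⊢; omega
      rw [hF.fs_top_eq α l a i _ p qh he ok dg ok' dg' (V0 k Q i)]
      cases p with
      | nil =>
        have dgL : ∀ e : {e : Q.E // Q.t e = a},
            (((QP.preCons e.1 (QP.castSrc e.2.symm qh)).length : ℤ))
              - (((QP.nil (Q.s e.1)).length : ℤ)) = (l - 1) + 1 := by
          intro e
          simp only [QP.length, QP.length_preCons, QP.length_castSrc] at dg' ⊢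
          push_cast at dg' ⊢; omega
        have dgR : ∀ e : {e : Q.E // Q.t e = a},
            (((QP.preCons e.1 (QP.castSrc e.2.symm (QP.cons qh α he))).length : ℤ))
              - (((QP.nil (Q.s e.1)).length : ℤ)) = l + 1 := by
          intro e
          simp only [QP.length, QP.length_preCons, QP.length_castSrc] at dg ⊢
          push_cast at dg ⊢; omega
        rw [D3 hδT hδ (l - 1) a _ qh ok' dg' dgL,
          D3 hδT hδ l a _ (QP.cons qh α he) ok dg dgR, map_sum]
        refine Finset.sum_congr rfl fun e _ => ?_
        have dgC : (((QP.cons (QP.preCons e.1 (QP.castSrc e.2.symm qh)) α he).length : ℤ))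
            - (((QP.nil (Q.s e.1)).length : ℤ)) = l + 1 := by
          simp only [QP.length, QP.length_preCons, QP.length_castSrc] at dg ⊢
          push_cast at dg ⊢; omega
        have h1 : emb (l + 1) (⟨Q.s e.1, Q.s e.1, Q.t α, QP.nil (Q.s e.1),
              QP.preCons e.1 (QP.castSrc e.2.symm (QP.cons qh α he)),
              assocPair_nil_left _, dgR e⟩ : Lam Q asc (l + 1)) (VA k Q e.1 rfl)
            = emb (l + 1) (⟨Q.s e.1, Q.s e.1, Q.t α, QP.nil (Q.s e.1),
              QP.cons (QP.preCons e.1 (QP.castSrc e.2.symm qh)) α he,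
              assocPair_nil_left _, dgC⟩ : Lam Q asc (l + 1)) (VA k Q e.1 rfl) :=
          emb_congr rfl rfl rfl (HEq.refl _)
            (heq_of_eq (by rw [QP.castSrc_cons]; rfl)) (HEq.refl _)
        rw [h1, hF.fs_top_eq α (l + 1) (Q.s e.1) (Q.s e.1) _ (QP.nil (Q.s e.1))
          (QP.preCons e.1 (QP.castSrc e.2.symm qh)) he (assocPair_nil_left _) dgC
          (assocPair_nil_left _)
          (by simp only [QP.length, QP.length_preCons, QP.length_castSrc] at dg ⊢
              push_cast at dg ⊢; omega) (VA k Q e.1 rfl)]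
        exact emb_congr (by omega) rfl rfl (HEq.refl _) (HEq.refl _) (HEq.refl _)
      | cons p' f hf =>
        have okp : AssocPair Q asc p' qh := assocPair_of_cons_left ok'
        have dg2 : (qh.length : ℤ) - (p'.length : ℤ) = (l - 1) + 1 := by
          simp only [QP.length] at dg' ⊢; push_cast at dg' ⊢; omega
        rw [D2 hδT hδ (l - 1) a _ _ p' f hf qh ok' dg' okp dg2]
        have okR : AssocPair Q asc p' (QP.cons qh α he) := assocPair_of_cons_left ok
        have dgR : (((QP.cons qh α he).length : ℤ)) - ((p'.length : ℤ)) = l + 1 := by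
          simp only [QP.length] at dg ⊢; push_cast at dg ⊢; omega
        rw [D2 hδT hδ l a _ _ p' f hf (QP.cons qh α he) ok dg okR dgR,
          hF.fs_top_eq α (l + 1) a _ _ p' qh he okR dgR okp
          (by simp only [QP.length] at dg ⊢; push_cast at dg ⊢; omega) (VA k Q f hf)]
        exact emb_congr (by omega) rfl rfl (HEq.refl _) (HEq.refl _) (HEq.refl _)
    · rw [hF.fs_top_ne α α₁ haa l a i _ p qh he ok dg (V0 k Q i), map_zero]
      cases p with
      | nil =>
        have dgR : ∀ e : {e : Q.E // Q.t e = a},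
            (((QP.preCons e.1 (QP.castSrc e.2.symm (QP.cons qh α₁ he))).length : ℤ))
              - (((QP.nil (Q.s e.1)).length : ℤ)) = l + 1 := by
          intro e
          simp only [QP.length, QP.length_preCons, QP.length_castSrc] at dg ⊢
          push_cast at dg ⊢; omega
        rw [D3 hδT hδ l a _ (QP.cons qh α₁ he) ok dg dgR, map_sum]
        refine (Finset.sum_eq_zero fun e _ => ?_).symm
        have dgC : (((QP.cons (QP.preCons e.1 (QP.castSrc e.2.symm qh)) α₁ he).length : ℤ))
            - (((QP.nil (Q.s e.1)).length : ℤ)) = l + 1 := by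
          simp only [QP.length, QP.length_preCons, QP.length_castSrc] at dg ⊢
          push_cast at dg ⊢; omega
        have h1 : emb (l + 1) (⟨Q.s e.1, Q.s e.1, Q.t α₁, QP.nil (Q.s e.1),
              QP.preCons e.1 (QP.castSrc e.2.symm (QP.cons qh α₁ he)),
              assocPair_nil_left _, dgR e⟩ : Lam Q asc (l + 1)) (VA k Q e.1 rfl)
            = emb (l + 1) (⟨Q.s e.1, Q.s e.1, Q.t α₁, QP.nil (Q.s e.1),
              QP.cons (QP.preCons e.1 (QP.castSrc e.2.symm qh)) α₁ he,
              assocPair_nil_left _, dgC⟩ : Lam Q asc (l + 1)) (VA k Q e.1 rfl) :=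
          emb_congr rfl rfl rfl (HEq.refl _)
            (heq_of_eq (by rw [QP.castSrc_cons]; rfl)) (HEq.refl _)
        rw [h1]
        exact hF.fs_top_ne α α₁ haa (l + 1) (Q.s e.1) (Q.s e.1) _ (QP.nil (Q.s e.1))
          (QP.preCons e.1 (QP.castSrc e.2.symm qh)) he (assocPair_nil_left _) dgC
          (VA k Q e.1 rfl)
      | cons p' f hf =>
        have okR : AssocPair Q asc p' (QP.cons qh α₁ he) := assocPair_of_cons_left ok
        have dgR : (((QP.cons qh α₁ he).length : ℤ)) - ((p'.length : ℤ)) = l + 1 := by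
          simp only [QP.length] at dg ⊢; push_cast at dg ⊢; omega
        rw [D2 hδT hδ l a _ _ p' f hf (QP.cons qh α₁ he) ok dg okR dgR]
        exact (hF.fs_top_ne α α₁ haa (l + 1) a _ _ p' qh he okR dgR (VA k Q f hf)).symm
  | nil =>
    by_cases hta : Q.t α = a
    · subst hta
      have dgA : (((QP.nil (Q.s α)).length : ℤ))
          - (((QP.preCons α p).length : ℤ)) = l - 1 := by
        simp only [QP.length, QP.length_preCons] at dg ⊢; push_cast at dg ⊢; omega
      rw [hF.fs_nil_eq α l i p ok dg (assocPair_nil_right _) dgA (V0 k Q i)]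
      cases p with
      | nil =>
        have dgB : (((QP.nil (Q.s α)).length : ℤ))
            - (((QP.cons (QP.nil (Q.s α)) α rfl).length : ℤ)) = l - 1 := by
          simp only [QP.length] at dg ⊢; push_cast at dg ⊢; omega
        have h2 : emb (l - 1) (⟨Q.s α, Q.t α, Q.s α, QP.preCons α (QP.nil (Q.t α)),
              QP.nil (Q.s α), assocPair_nil_right _, dgA⟩ : Lam Q asc (l - 1))
              (V0 k Q (Q.t α))
            = emb (l - 1) (⟨Q.s α, Q.t α, Q.s α, QP.cons (QP.nil (Q.s α)) α rfl,
              QP.nil (Q.s α), assocPair_nil_right _, dgB⟩ : Lam Q asc (l - 1))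
              (V0 k Q (Q.t α)) :=
          emb_congr rfl rfl rfl (heq_of_eq (QP.preCons_nil α)) (HEq.refl _) (HEq.refl _)
        rw [h2, D2 hδT hδ (l - 1) (Q.s α) _ (Q.s α) (QP.nil (Q.s α)) α rfl
          (QP.nil (Q.s α)) (assocPair_nil_right _) dgB (assocPair_nil_left _)
          (by simp only [QP.length] at dg ⊢; push_cast at dg ⊢; omega)]
        have dgR : ∀ e : {e : Q.E // Q.t e = Q.t α},
            (((QP.preCons e.1 (QP.castSrc e.2.symm (QP.nil (Q.t α)))).length : ℤ))
              - (((QP.nil (Q.s e.1)).length : ℤ)) = l + 1 := by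
          intro e
          simp only [QP.length, QP.length_preCons, QP.length_castSrc] at dg ⊢
          push_cast at dg ⊢; omega
        rw [D3 hδT hδ l (Q.t α) _ (QP.nil (Q.t α)) ok dg dgR, map_sum]
        rw [Fintype.sum_eq_single (⟨α, rfl⟩ : {e : Q.E // Q.t e = Q.t α}) ?_]
        · have dgC : (((QP.cons (QP.nil (Q.s α)) α rfl).length : ℤ))
              - (((QP.nil (Q.s α)).length : ℤ)) = l + 1 := by
            simp only [QP.length] at dg ⊢; push_cast at dg ⊢; omega
          have h3 : emb (l + 1) (⟨Q.s α, Q.s α, Q.t α, QP.nil (Q.s α),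
                QP.preCons α (QP.castSrc (rfl : Q.t α = Q.t α).symm (QP.nil (Q.t α))),
                assocPair_nil_left _, dgR ⟨α, rfl⟩⟩ : Lam Q asc (l + 1)) (VA k Q α rfl)
              = emb (l + 1) (⟨Q.s α, Q.s α, Q.t α, QP.nil (Q.s α),
                QP.cons (QP.nil (Q.s α)) α rfl,
                assocPair_nil_left _, dgC⟩ : Lam Q asc (l + 1)) (VA k Q α rfl) :=
            emb_congr rfl rfl rfl (HEq.refl _)
              (QP.preCons_castNil_heq α rfl) (HEq.refl _)
          rw [h3, hF.fs_top_eq α (l + 1) (Q.s α) (Q.s α) (Q.s α) (QP.nil (Q.s α))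
            (QP.nil (Q.s α)) rfl (assocPair_nil_left _) dgC (assocPair_nil_left _)
            (by simp only [QP.length] at dg ⊢; push_cast at dg ⊢; omega)
            (VA k Q α rfl)]
          exact emb_congr (by omega) rfl rfl (HEq.refl _) (HEq.refl _) (HEq.refl _)
        · intro e hne
          have hne1 : α ≠ e.1 := by
            intro h
            exact hne (Subtype.ext h.symm)
          have dgC : (((QP.cons (QP.nil (Q.s e.1)) e.1 rfl).length : ℤ))
              - (((QP.nil (Q.s e.1)).length : ℤ)) = l + 1 := by
            simp only [QP.length] at dg ⊢; push_cast at dg ⊢; omega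
          have h3 : emb (l + 1) (⟨Q.s e.1, Q.s e.1, Q.t α, QP.nil (Q.s e.1),
                QP.preCons e.1 (QP.castSrc e.2.symm (QP.nil (Q.t α))),
                assocPair_nil_left _, dgR e⟩ : Lam Q asc (l + 1)) (VA k Q e.1 rfl)
              = emb (l + 1) (⟨Q.s e.1, Q.s e.1, Q.t e.1, QP.nil (Q.s e.1),
                QP.cons (QP.nil (Q.s e.1)) e.1 rfl,
                assocPair_nil_left _, dgC⟩ : Lam Q asc (l + 1)) (VA k Q e.1 rfl) :=
            emb_congr rfl rfl e.2.symm (HEq.refl _)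
              (QP.preCons_castNil_heq e.1 e.2) (HEq.refl _)
          rw [h3]
          exact hF.fs_top_ne α e.1 hne1 (l + 1) (Q.s e.1) (Q.s e.1) (Q.s e.1)
            (QP.nil (Q.s e.1)) (QP.nil (Q.s e.1)) rfl (assocPair_nil_left _) dgC
            (VA k Q e.1 rfl)
      | cons p' g hg =>
        have h2 : emb (l - 1) (⟨Q.s α, Q.t g, Q.s α,
              QP.preCons α (QP.cons p' g hg), QP.nil (Q.s α),
              assocPair_nil_right _, dgA⟩ : Lam Q asc (l - 1)) (V0 k Q (Q.t g))
            = emb (l - 1) (⟨Q.s α, Q.t g, Q.s α,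
              QP.cons (QP.preCons α p') g hg, QP.nil (Q.s α),
              assocPair_nil_right _, by
                simpa only [QP.preCons_cons] using dgA⟩ : Lam Q asc (l - 1))
              (V0 k Q (Q.t g)) :=
          emb_congr rfl rfl rfl (heq_of_eq (QP.preCons_cons α p' g hg))
            (HEq.refl _) (HEq.refl _)
        rw [h2, D2 hδT hδ (l - 1) (Q.s α) _ (Q.s α) (QP.preCons α p') g hg
          (QP.nil (Q.s α)) (assocPair_nil_right _) (by
            simpa only [QP.preCons_cons] using dgA) (assocPair_nil_right _)
          (by simp only [QP.length, QP.length_preCons] at dg ⊢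
              push_cast at dg ⊢; omega)]
        have okR : AssocPair Q asc p' (QP.nil (Q.t α)) := assocPair_nil_right _
        have dgR : (((QP.nil (Q.t α)).length : ℤ)) - ((p'.length : ℤ)) = l + 1 := by
          simp only [QP.length] at dg ⊢; push_cast at dg ⊢; omega
        rw [D2 hδT hδ l (Q.t α) _ (Q.t α) p' g hg (QP.nil (Q.t α)) ok dg okR dgR,
          hF.fs_nil_eq α (l + 1) _ p' okR dgR (assocPair_nil_right _)
          (by simp only [QP.length, QP.length_preCons] at dg ⊢
              push_cast at dg ⊢; omega) (VA k Q g hg)]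
        exact emb_congr (by omega) rfl rfl (HEq.refl _) (HEq.refl _) (HEq.refl _)
    · rw [hF.fs_nil_ne α l (⟨a, i, a, p, QP.nil a, ok, dg⟩ : Lam Q asc l)
        (V0 k Q i) (by simp [QP.length]) hta, map_zero]
      cases p with
      | nil =>
        have dgR : ∀ e : {e : Q.E // Q.t e = a},
            (((QP.preCons e.1 (QP.castSrc e.2.symm (QP.nil a))).length : ℤ))
              - (((QP.nil (Q.s e.1)).length : ℤ)) = l + 1 := by
          intro e
          simp only [QP.length, QP.length_preCons, QP.length_castSrc] at dg ⊢
          push_cast at dg ⊢; omega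
        rw [D3 hδT hδ l a _ (QP.nil a) ok dg dgR, map_sum]
        refine (Finset.sum_eq_zero fun e _ => ?_).symm
        have hne1 : α ≠ e.1 := by
          intro h
          exact hta (h ▸ e.2)
        have dgC : (((QP.cons (QP.nil (Q.s e.1)) e.1 rfl).length : ℤ))
            - (((QP.nil (Q.s e.1)).length : ℤ)) = l + 1 := by
          simp only [QP.length] at dg ⊢; push_cast at dg ⊢; omega
        have h3 : emb (l + 1) (⟨Q.s e.1, Q.s e.1, a, QP.nil (Q.s e.1),
              QP.preCons e.1 (QP.castSrc e.2.symm (QP.nil a)),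
              assocPair_nil_left _, dgR e⟩ : Lam Q asc (l + 1)) (VA k Q e.1 rfl)
            = emb (l + 1) (⟨Q.s e.1, Q.s e.1, Q.t e.1, QP.nil (Q.s e.1),
              QP.cons (QP.nil (Q.s e.1)) e.1 rfl,
              assocPair_nil_left _, dgC⟩ : Lam Q asc (l + 1)) (VA k Q e.1 rfl) :=
          emb_congr rfl rfl e.2.symm (HEq.refl _)
            (QP.preCons_castNil_heq e.1 e.2) (HEq.refl _)
        rw [h3]
        exact hF.fs_top_ne α e.1 hne1 (l + 1) (Q.s e.1) (Q.s e.1) (Q.s e.1)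
          (QP.nil (Q.s e.1)) (QP.nil (Q.s e.1)) rfl (assocPair_nil_left _) dgC
          (VA k Q e.1 rfl)
      | cons p' g hg =>
        have okR : AssocPair Q asc p' (QP.nil a) := assocPair_nil_right _
        have dgR : (((QP.nil a).length : ℤ)) - ((p'.length : ℤ)) = l + 1 := by
          simp only [QP.length] at dg ⊢; push_cast at dg ⊢; omega
        rw [D2 hδT hδ l a _ a p' g hg (QP.nil a) ok dg okR dgR]
        exact (hF.fs_nil_ne α (l + 1) (⟨a, _, a, p', QP.nil a, okR, dgR⟩ :
          Lam Q asc (l + 1)) (VA k Q g hg) (by simp [QP.length]) hta).symm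

end CommS
section CommA
variable {k : Type} [Field k] {Q : FQ} {asc : ∀ i : Q.V, (∃ e, Q.t e = i) → Q.E}
variable {δ : ∀ l : ℤ, PL k Q asc l →ₗ[AlgA k Q] PL k Q asc (l + 1)}
variable {δT : PT k Q asc →ₗ[AlgA k Q] PT k Q asc}
variable {Tv : Q.V → PT k Q asc →ₗ[AlgA k Q] PT k Q asc}
variable {Ta Ts : Q.E → PT k Q asc →ₗ[AlgA k Q] PT k Q asc}

/-- `Ta` commutation in the case `q = cons qh α₁ he`. -/
lemma comm_a_qcons
    (hδT : ∀ (l : ℤ) (v : PL k Q asc l),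
      δT (DFinsupp.single l v) = DFinsupp.single (l + 1) (δ l v))
    (hδ : IsLeavittDiff k Q asc δ)
    (hF : ActionFormulas k Q asc (fun j u => Tv j u) (fun e u => Ta e u)
      (fun e u => Ts e u))
    (α : Q.E) (l : ℤ) (a i c : Q.V) (p : QP Q a i) (qh : QP Q a c) (α₁ : Q.E)
    (he : Q.s α₁ = c) (ok : AssocPair Q asc p (QP.cons qh α₁ he))
    (dg : (((QP.cons qh α₁ he).length : ℤ)) - ((p.length : ℤ)) = l) :
    δT (Ta α (emb l (⟨a, i, Q.t α₁, p, QP.cons qh α₁ he, ok, dg⟩ : Lam Q asc l)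
        (V0 k Q i)))
      = Ta α (δT (emb l (⟨a, i, Q.t α₁, p, QP.cons qh α₁ he, ok, dg⟩ : Lam Q asc l)
        (V0 k Q i))) := by
  have hC : ∀ (m : ℤ) (x : Lam Q asc m), x.q.length ≠ 0 →
      ¬(x.q.length = 0 ∧ x.p.firstArrow = some α ∧ IsAssoc Q asc α) := by
    rintro m x hx ⟨h1, -, -⟩
    exact hx h1
  by_cases hsb : Q.s α = Q.t α₁
  · have okW : AssocPair Q asc p (QP.cons (QP.cons qh α₁ he) α hsb) :=
      assocPair_snoc ok
    have dgW : (((QP.cons (QP.cons qh α₁ he) α hsb).length : ℤ)) - ((p.length : ℤ))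
        = l + 1 := by
      simp only [QP.length] at dg ⊢; push_cast at dg ⊢; omega
    rw [hF.fa_ext α l (⟨a, i, Q.t α₁, p, QP.cons qh α₁ he, ok, dg⟩ : Lam Q asc l)
      (V0 k Q i) (hC l _ (by simp [QP.length])) hsb okW dgW]
    cases p with
    | nil =>
      have dgL : ∀ e : {e : Q.E // Q.t e = a},
          (((QP.preCons e.1 (QP.castSrc e.2.symm
              (QP.cons (QP.cons qh α₁ he) α hsb))).length : ℤ))
            - (((QP.nil (Q.s e.1)).length : ℤ)) = (l + 1) + 1 := by
        intro e
        simp only [QP.length, QP.length_preCons, QP.length_castSrc] at dg ⊢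
        push_cast at dg ⊢; omega
      have dgR : ∀ e : {e : Q.E // Q.t e = a},
          (((QP.preCons e.1 (QP.castSrc e.2.symm (QP.cons qh α₁ he))).length : ℤ))
            - (((QP.nil (Q.s e.1)).length : ℤ)) = l + 1 := by
        intro e
        simp only [QP.length, QP.length_preCons, QP.length_castSrc] at dg ⊢
        push_cast at dg ⊢; omega
      rw [D3 hδT hδ (l + 1) a _ (QP.cons (QP.cons qh α₁ he) α hsb) okW dgW dgL,
        D3 hδT hδ l a _ (QP.cons qh α₁ he) ok dg dgR, map_sum]
      refine Finset.sum_congr rfl fun e _ => ?_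
      have dgC : (((QP.cons (QP.preCons e.1 (QP.castSrc e.2.symm (QP.cons qh α₁ he)))
            α hsb).length : ℤ)) - (((QP.nil (Q.s e.1)).length : ℤ)) = (l + 1) + 1 := by
        simp only [QP.length, QP.length_preCons, QP.length_castSrc] at dg ⊢
        push_cast at dg ⊢; omega
      have h1 : emb ((l + 1) + 1) (⟨Q.s e.1, Q.s e.1, Q.t α, QP.nil (Q.s e.1),
            QP.preCons e.1 (QP.castSrc e.2.symm (QP.cons (QP.cons qh α₁ he) α hsb)),
            assocPair_nil_left _, dgL e⟩ : Lam Q asc ((l + 1) + 1)) (VA k Q e.1 rfl)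
          = emb ((l + 1) + 1) (⟨Q.s e.1, Q.s e.1, Q.t α, QP.nil (Q.s e.1),
            QP.cons (QP.preCons e.1 (QP.castSrc e.2.symm (QP.cons qh α₁ he))) α hsb,
            assocPair_nil_left _, dgC⟩ : Lam Q asc ((l + 1) + 1)) (VA k Q e.1 rfl) :=
        emb_congr rfl rfl rfl (HEq.refl _)
          (heq_of_eq (by rw [QP.castSrc_cons]; rfl)) (HEq.refl _)
      rw [h1, hF.fa_ext α (l + 1) (⟨Q.s e.1, Q.s e.1, Q.t α₁, QP.nil (Q.s e.1),
        QP.preCons e.1 (QP.castSrc e.2.symm (QP.cons qh α₁ he)),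
        assocPair_nil_left _, dgR e⟩ : Lam Q asc (l + 1)) (VA k Q e.1 rfl)
        (hC (l + 1) _ (by simp [QP.length_preCons])) hsb (assocPair_nil_left _) dgC]
    | cons p' f hf =>
      have okR : AssocPair Q asc p' (QP.cons qh α₁ he) := assocPair_of_cons_left ok
      have dgR : (((QP.cons qh α₁ he).length : ℤ)) - ((p'.length : ℤ)) = l + 1 := by
        simp only [QP.length] at dg ⊢; push_cast at dg ⊢; omega
      have okR' : AssocPair Q asc p' (QP.cons (QP.cons qh α₁ he) α hsb) :=
        assocPair_snoc okR
      have dgR' : (((QP.cons (QP.cons qh α₁ he) α hsb).length : ℤ))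
          - ((p'.length : ℤ)) = (l + 1) + 1 := by
        simp only [QP.length] at dg ⊢; push_cast at dg ⊢; omega
      rw [D2 hδT hδ (l + 1) a _ _ p' f hf (QP.cons (QP.cons qh α₁ he) α hsb) okW dgW
        okR' dgR', D2 hδT hδ l a _ _ p' f hf (QP.cons qh α₁ he) ok dg okR dgR,
        hF.fa_ext α (l + 1) (⟨a, _, Q.t α₁, p', QP.cons qh α₁ he, okR, dgR⟩ :
          Lam Q asc (l + 1)) (VA k Q f hf)
        (hC (l + 1) _ (by simp [QP.length])) hsb okR' dgR']
  · rw [hF.fa_zero α l (⟨a, i, Q.t α₁, p, QP.cons qh α₁ he, ok, dg⟩ : Lam Q asc l)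
      (V0 k Q i) (hC l _ (by simp [QP.length])) hsb, map_zero]
    cases p with
    | nil =>
      have dgR : ∀ e : {e : Q.E // Q.t e = a},
          (((QP.preCons e.1 (QP.castSrc e.2.symm (QP.cons qh α₁ he))).length : ℤ))
            - (((QP.nil (Q.s e.1)).length : ℤ)) = l + 1 := by
        intro e
        simp only [QP.length, QP.length_preCons, QP.length_castSrc] at dg ⊢
        push_cast at dg ⊢; omega
      rw [D3 hδT hδ l a _ (QP.cons qh α₁ he) ok dg dgR, map_sum]
      refine (Finset.sum_eq_zero fun e _ => ?_).symm
      exact hF.fa_zero α (l + 1) (⟨Q.s e.1, Q.s e.1, Q.t α₁, QP.nil (Q.s e.1),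
        QP.preCons e.1 (QP.castSrc e.2.symm (QP.cons qh α₁ he)),
        assocPair_nil_left _, dgR e⟩ : Lam Q asc (l + 1)) (VA k Q e.1 rfl)
        (hC (l + 1) _ (by simp [QP.length_preCons])) hsb
    | cons p' f hf =>
      have okR : AssocPair Q asc p' (QP.cons qh α₁ he) := assocPair_of_cons_left ok
      have dgR : (((QP.cons qh α₁ he).length : ℤ)) - ((p'.length : ℤ)) = l + 1 := by
        simp only [QP.length] at dg ⊢; push_cast at dg ⊢; omega
      rw [D2 hδT hδ l a _ _ p' f hf (QP.cons qh α₁ he) ok dg okR dgR]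
      exact (hF.fa_zero α (l + 1) (⟨a, _, Q.t α₁, p', QP.cons qh α₁ he, okR, dgR⟩ :
        Lam Q asc (l + 1)) (VA k Q f hf)
        (hC (l + 1) _ (by simp [QP.length])) hsb).symm

end CommA
section CommA2
variable {k : Type} [Field k] {Q : FQ} {asc : ∀ i : Q.V, (∃ e, Q.t e = i) → Q.E}
variable {δ : ∀ l : ℤ, PL k Q asc l →ₗ[AlgA k Q] PL k Q asc (l + 1)}
variable {δT : PT k Q asc →ₗ[AlgA k Q] PT k Q asc}
variable {Tv : Q.V → PT k Q asc →ₗ[AlgA k Q] PT k Q asc}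
variable {Ta Ts : Q.E → PT k Q asc →ₗ[AlgA k Q] PT k Q asc}

/-- `Ta` commutation in the case `p = nil`, `q = nil`. -/
lemma comm_a_qnil_pnil
    (hδT : ∀ (l : ℤ) (v : PL k Q asc l),
      δT (DFinsupp.single l v) = DFinsupp.single (l + 1) (δ l v))
    (hδ : IsLeavittDiff k Q asc δ)
    (hF : ActionFormulas k Q asc (fun j u => Tv j u) (fun e u => Ta e u)
      (fun e u => Ts e u))
    (α : Q.E) (l : ℤ) (a : Q.V) (ok : AssocPair Q asc (QP.nil a) (QP.nil a))
    (dg : (((QP.nil a).length : ℤ)) - (((QP.nil a).length : ℤ)) = l) :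
    δT (Ta α (emb l (⟨a, a, a, QP.nil a, QP.nil a, ok, dg⟩ : Lam Q asc l)
        (V0 k Q a)))
      = Ta α (δT (emb l (⟨a, a, a, QP.nil a, QP.nil a, ok, dg⟩ : Lam Q asc l)
        (V0 k Q a))) := by
  have hClen : ∀ (m : ℤ) (x : Lam Q asc m), x.q.length ≠ 0 →
      ¬(x.q.length = 0 ∧ x.p.firstArrow = some α ∧ IsAssoc Q asc α) := by
    rintro m x hx ⟨h1, -, -⟩
    exact hx h1
  have hCnil : ∀ (m : ℤ) (x : Lam Q asc m), x.p.firstArrow = none →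
      ¬(x.q.length = 0 ∧ x.p.firstArrow = some α ∧ IsAssoc Q asc α) := by
    rintro m x hx ⟨-, h2, -⟩
    rw [hx] at h2
    exact Option.some_ne_none _ h2.symm
  have dgR : ∀ e : {e : Q.E // Q.t e = a},
      (((QP.preCons e.1 (QP.castSrc e.2.symm (QP.nil a))).length : ℤ))
        - (((QP.nil (Q.s e.1)).length : ℤ)) = l + 1 := by
    intro e
    simp only [QP.length, QP.length_preCons, QP.length_castSrc] at dg ⊢
    push_cast at dg ⊢; omega
  rw [D3 hδT hδ l a _ (QP.nil a) ok dg dgR, map_sum]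
  by_cases hsb : Q.s α = a
  · subst hsb
    have okW : AssocPair Q asc (QP.nil (Q.s α))
        (QP.cons (QP.nil (Q.s α)) α rfl) := assocPair_nil_left _
    have dgW : (((QP.cons (QP.nil (Q.s α)) α rfl).length : ℤ))
        - (((QP.nil (Q.s α)).length : ℤ)) = l + 1 := by
      simp only [QP.length] at dg ⊢; push_cast at dg ⊢; omega
    rw [hF.fa_ext α l (⟨Q.s α, Q.s α, Q.s α, QP.nil (Q.s α), QP.nil (Q.s α), ok, dg⟩ :
      Lam Q asc l) (V0 k Q (Q.s α)) (hCnil l _ (by simp [QP.firstArrow])) rfl okW dgW]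
    have dgL : ∀ e : {e : Q.E // Q.t e = Q.s α},
        (((QP.preCons e.1 (QP.castSrc e.2.symm
            (QP.cons (QP.nil (Q.s α)) α rfl))).length : ℤ))
          - (((QP.nil (Q.s e.1)).length : ℤ)) = (l + 1) + 1 := by
      intro e
      simp only [QP.length, QP.length_preCons, QP.length_castSrc] at dg ⊢
      push_cast at dg ⊢; omega
    rw [D3 hδT hδ (l + 1) (Q.s α) _ (QP.cons (QP.nil (Q.s α)) α rfl) okW dgW dgL]
    refine Finset.sum_congr rfl fun e _ => ?_
    have dgE : (((QP.cons (QP.preCons e.1 (QP.castSrc e.2.symm (QP.nil (Q.s α))))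
          α rfl).length : ℤ)) - (((QP.nil (Q.s e.1)).length : ℤ)) = (l + 1) + 1 := by
      simp only [QP.length, QP.length_preCons, QP.length_castSrc] at dg ⊢
      push_cast at dg ⊢; omega
    rw [hF.fa_ext α (l + 1) (⟨Q.s e.1, Q.s e.1, Q.s α, QP.nil (Q.s e.1),
      QP.preCons e.1 (QP.castSrc e.2.symm (QP.nil (Q.s α))),
      assocPair_nil_left _, dgR e⟩ : Lam Q asc (l + 1)) (VA k Q e.1 rfl)
      (hClen (l + 1) _ (by simp [QP.length_preCons])) rfl (assocPair_nil_left _) dgE]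
    exact emb_congr rfl rfl rfl (HEq.refl _)
      (heq_of_eq (by rw [QP.castSrc_cons]; rfl)) (HEq.refl _)
  · rw [hF.fa_zero α l (⟨a, a, a, QP.nil a, QP.nil a, ok, dg⟩ : Lam Q asc l)
      (V0 k Q a) (hCnil l _ (by simp [QP.firstArrow])) hsb, map_zero]
    refine (Finset.sum_eq_zero fun e _ => ?_).symm
    exact hF.fa_zero α (l + 1) (⟨Q.s e.1, Q.s e.1, a, QP.nil (Q.s e.1),
      QP.preCons e.1 (QP.castSrc e.2.symm (QP.nil a)),
      assocPair_nil_left _, dgR e⟩ : Lam Q asc (l + 1)) (VA k Q e.1 rfl)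
      (hClen (l + 1) _ (by simp [QP.length_preCons])) hsb

end CommA2
section CommA3
variable {k : Type} [Field k] {Q : FQ} {asc : ∀ i : Q.V, (∃ e, Q.t e = i) → Q.E}
variable {δ : ∀ l : ℤ, PL k Q asc l →ₗ[AlgA k Q] PL k Q asc (l + 1)}
variable {δT : PT k Q asc →ₗ[AlgA k Q] PT k Q asc}
variable {Tv : Q.V → PT k Q asc →ₗ[AlgA k Q] PT k Q asc}
variable {Ta Ts : Q.E → PT k Q asc →ₗ[AlgA k Q] PT k Q asc}

/-- `Ta` commutation in the case `q = nil`, `p = preCons γ pt`. -/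
lemma comm_a_qnil_ppre
    (hδT : ∀ (l : ℤ) (v : PL k Q asc l),
      δT (DFinsupp.single l v) = DFinsupp.single (l + 1) (δ l v))
    (hδ : IsLeavittDiff k Q asc δ)
    (hF : ActionFormulas k Q asc (fun j u => Tv j u) (fun e u => Ta e u)
      (fun e u => Ts e u))
    (α γ : Q.E) (l : ℤ) (i : Q.V) (pt : QP Q (Q.t γ) i)
    (ok : AssocPair Q asc (QP.preCons γ pt) (QP.nil (Q.s γ)))
    (dg : (((QP.nil (Q.s γ)).length : ℤ)) - (((QP.preCons γ pt).length : ℤ)) = l) :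
    δT (Ta α (emb l (⟨Q.s γ, i, Q.s γ, QP.preCons γ pt, QP.nil (Q.s γ), ok, dg⟩ :
        Lam Q asc l) (V0 k Q i)))
      = Ta α (δT (emb l (⟨Q.s γ, i, Q.s γ, QP.preCons γ pt, QP.nil (Q.s γ), ok, dg⟩ :
        Lam Q asc l) (V0 k Q i))) := by
  by_cases hCγ : γ = α ∧ IsAssoc Q asc α
  · obtain ⟨rfl, hα⟩ := hCγ
    have dg1 : (((QP.nil (Q.t γ)).length : ℤ)) - ((pt.length : ℤ)) = l + 1 := by
      simp only [QP.length, QP.length_preCons] at dg ⊢; push_cast at dg ⊢; omega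
    have dgb : ∀ b : {b : Q.E // Q.t b = Q.t γ ∧ b ≠ γ},
        (((QP.cons (QP.nil (Q.s b.1)) b.1 rfl).length : ℤ))
          - (((QP.preCons b.1 (QP.castSrc b.2.1.symm pt)).length : ℤ)) = l + 1 := by
      intro b
      simp only [QP.length, QP.length_preCons, QP.length_castSrc] at dg ⊢
      push_cast at dg ⊢; omega
    rw [hF.fa_assoc γ hα i pt ok l dg (assocPair_nil_right _) dg1 (okb_of γ hα pt) dgb,
      map_sub, map_sum]
    cases pt with
    | nil =>
      have dgE : ∀ e : Q.E, (((QP.cons (QP.nil (Q.s e)) e rfl).length : ℤ))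
          - (((QP.nil (Q.s e)).length : ℤ)) = (l + 1) + 1 := by
        intro e
        simp only [QP.length, QP.length_preCons] at dg ⊢; push_cast at dg ⊢; omega
      have dgL : ∀ e : {e : Q.E // Q.t e = Q.t γ},
          (((QP.preCons e.1 (QP.castSrc e.2.symm (QP.nil (Q.t γ)))).length : ℤ))
            - (((QP.nil (Q.s e.1)).length : ℤ)) = (l + 1) + 1 := by
        intro e
        simp only [QP.length, QP.length_preCons, QP.length_castSrc] at dg ⊢
        push_cast at dg ⊢; omega
      have okN : ∀ b : {b : Q.E // Q.t b = Q.t γ ∧ b ≠ γ},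
          AssocPair Q asc (QP.cons (QP.nil (Q.s b.1)) b.1 rfl)
            (QP.cons (QP.nil (Q.s b.1)) b.1 rfl) := fun b =>
        assocPair_first_notassoc (by simp [QP.firstArrow]) (by simp [QP.firstArrow])
          (notAssoc_of_mem hα b)
      have dgN : ∀ b : {b : Q.E // Q.t b = Q.t γ ∧ b ≠ γ},
          (((QP.cons (QP.nil (Q.s b.1)) b.1 rfl).length : ℤ))
            - (((QP.cons (QP.nil (Q.s b.1)) b.1 rfl).length : ℤ)) = l + 1 := by
        intro b
        simp only [QP.length, QP.length_preCons] at dg ⊢; push_cast at dg ⊢; omega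
      rw [D3 hδT hδ (l + 1) (Q.t γ) _ (QP.nil (Q.t γ)) (assocPair_nil_right _) dg1 dgL]
      rw [show (∑ e : {e : Q.E // Q.t e = Q.t γ},
            emb ((l + 1) + 1) (⟨Q.s e.1, Q.s e.1, Q.t γ, QP.nil (Q.s e.1),
              QP.preCons e.1 (QP.castSrc e.2.symm (QP.nil (Q.t γ))),
              assocPair_nil_left _, dgL e⟩ : Lam Q asc ((l + 1) + 1)) (VA k Q e.1 rfl))
          = ∑ e : {e : Q.E // Q.t e = Q.t γ},
              emb ((l + 1) + 1) (⟨Q.s e.1, Q.s e.1, Q.t e.1, QP.nil (Q.s e.1),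
                QP.cons (QP.nil (Q.s e.1)) e.1 rfl, assocPair_nil_left _,
                dgE e.1⟩ : Lam Q asc ((l + 1) + 1)) (VA k Q e.1 rfl)
          from Finset.sum_congr rfl fun e _ => emb_congr rfl rfl e.2.symm (HEq.refl _)
            (QP.preCons_castNil_heq e.1 e.2) (HEq.refl _)]
      rw [show (∑ b : {b : Q.E // Q.t b = Q.t γ ∧ b ≠ γ},
            δT (emb (l + 1) (⟨Q.s b.1, Q.t γ, Q.t b.1,
              QP.preCons b.1 (QP.castSrc b.2.1.symm (QP.nil (Q.t γ))),
              QP.cons (QP.nil (Q.s b.1)) b.1 rfl, okb_of γ hα (QP.nil (Q.t γ)) b,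
              dgb b⟩ : Lam Q asc (l + 1)) (V0 k Q (Q.t γ))))
          = ∑ b : {b : Q.E // Q.t b = Q.t γ ∧ b ≠ γ},
              emb ((l + 1) + 1) (⟨Q.s b.1, Q.s b.1, Q.t b.1, QP.nil (Q.s b.1),
                QP.cons (QP.nil (Q.s b.1)) b.1 rfl, assocPair_nil_left _,
                dgE b.1⟩ : Lam Q asc ((l + 1) + 1)) (VA k Q b.1 rfl)
          from Finset.sum_congr rfl fun b _ => by
            rw [show emb (l + 1) (⟨Q.s b.1, Q.t γ, Q.t b.1,
                QP.preCons b.1 (QP.castSrc b.2.1.symm (QP.nil (Q.t γ))),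
                QP.cons (QP.nil (Q.s b.1)) b.1 rfl, okb_of γ hα (QP.nil (Q.t γ)) b,
                dgb b⟩ : Lam Q asc (l + 1)) (V0 k Q (Q.t γ))
              = emb (l + 1) (⟨Q.s b.1, Q.t b.1, Q.t b.1,
                QP.cons (QP.nil (Q.s b.1)) b.1 rfl,
                QP.cons (QP.nil (Q.s b.1)) b.1 rfl, okN b, dgN b⟩ : Lam Q asc (l + 1))
                (V0 k Q (Q.t b.1))
              from emb_congr rfl b.2.1.symm rfl (QP.preCons_castNil_heq b.1 b.2.1)
                (HEq.refl _) (V0_heq b.2.1.symm),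
              D2 hδT hδ (l + 1) (Q.s b.1) _ (Q.t b.1) (QP.nil (Q.s b.1)) b.1 rfl
                (QP.cons (QP.nil (Q.s b.1)) b.1 rfl) (okN b) (dgN b)
                (assocPair_nil_left _) (dgE b.1)]]
      have okM : AssocPair Q asc (QP.cons (QP.nil (Q.s γ)) γ rfl) (QP.nil (Q.s γ)) :=
        assocPair_nil_right _
      have dgM : (((QP.nil (Q.s γ)).length : ℤ))
          - (((QP.cons (QP.nil (Q.s γ)) γ rfl).length : ℤ)) = l := by
        simp only [QP.length, QP.length_preCons] at dg ⊢; push_cast at dg ⊢; omega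
      have dgM2 : (((QP.nil (Q.s γ)).length : ℤ))
          - (((QP.nil (Q.s γ)).length : ℤ)) = l + 1 := by
        simp only [QP.length, QP.length_preCons] at dg ⊢; push_cast at dg ⊢; omega
      rw [show emb l (⟨Q.s γ, Q.t γ, Q.s γ, QP.preCons γ (QP.nil (Q.t γ)),
            QP.nil (Q.s γ), ok, dg⟩ : Lam Q asc l) (V0 k Q (Q.t γ))
          = emb l (⟨Q.s γ, Q.t γ, Q.s γ, QP.cons (QP.nil (Q.s γ)) γ rfl,
            QP.nil (Q.s γ), okM, dgM⟩ : Lam Q asc l) (V0 k Q (Q.t γ))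
          from emb_congr rfl rfl rfl (heq_of_eq (QP.preCons_nil γ)) (HEq.refl _)
            (HEq.refl _),
        D2 hδT hδ l (Q.s γ) _ (Q.s γ) (QP.nil (Q.s γ)) γ rfl (QP.nil (Q.s γ)) okM dgM
          (assocPair_nil_left _) dgM2,
        hF.fa_ext γ (l + 1) (⟨Q.s γ, Q.s γ, Q.s γ, QP.nil (Q.s γ), QP.nil (Q.s γ),
          assocPair_nil_left _, dgM2⟩ : Lam Q asc (l + 1)) (VA k Q γ rfl)
          (hC_nil (l + 1) _ (by simp [QP.firstArrow])) rfl (assocPair_nil_left _)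
          (dgE γ)]
      exact sum_split_sub γ (fun e => emb ((l + 1) + 1) (⟨Q.s e, Q.s e, Q.t e,
        QP.nil (Q.s e), QP.cons (QP.nil (Q.s e)) e rfl, assocPair_nil_left _,
        dgE e⟩ : Lam Q asc ((l + 1) + 1)) (VA k Q e rfl))
    | @cons jmid pt' g hg =>
      have okR : AssocPair Q asc pt' (QP.nil (Q.t γ)) := assocPair_nil_right _
      have dgX : (((QP.nil (Q.t γ)).length : ℤ)) - ((pt'.length : ℤ)) = (l + 1) + 1 := by
        simp only [QP.length, QP.length_preCons] at dg ⊢; push_cast at dg ⊢; omega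
      rw [D2 hδT hδ (l + 1) (Q.t γ) jmid (Q.t γ) pt' g hg (QP.nil (Q.t γ))
        (assocPair_nil_right _) dg1 okR dgX]
      have okXb : ∀ b : {b : Q.E // Q.t b = Q.t γ ∧ b ≠ γ},
          AssocPair Q asc
            (QP.cons (QP.preCons b.1 (QP.castSrc b.2.1.symm pt')) g hg)
            (QP.cons (QP.nil (Q.s b.1)) b.1 rfl) := fun b =>
        assocPair_first_notassoc
          (by simp [QP.firstArrow, QP.firstArrow_preCons])
          (by simp [QP.firstArrow]) (notAssoc_of_mem hα b)
      have dgXb : ∀ b : {b : Q.E // Q.t b = Q.t γ ∧ b ≠ γ},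
          (((QP.cons (QP.nil (Q.s b.1)) b.1 rfl).length : ℤ))
            - (((QP.cons (QP.preCons b.1 (QP.castSrc b.2.1.symm pt')) g hg).length : ℤ))
              = l + 1 := by
        intro b
        simp only [QP.length, QP.length_preCons, QP.length_castSrc] at dg ⊢
        push_cast at dg ⊢; omega
      have dgXb2 : ∀ b : {b : Q.E // Q.t b = Q.t γ ∧ b ≠ γ},
          (((QP.cons (QP.nil (Q.s b.1)) b.1 rfl).length : ℤ))
            - (((QP.preCons b.1 (QP.castSrc b.2.1.symm pt')).length : ℤ))
              = (l + 1) + 1 := by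
        intro b
        simp only [QP.length, QP.length_preCons, QP.length_castSrc] at dg ⊢
        push_cast at dg ⊢; omega
      rw [show (∑ b : {b : Q.E // Q.t b = Q.t γ ∧ b ≠ γ},
            δT (emb (l + 1) (⟨Q.s b.1, Q.t g, Q.t b.1,
              QP.preCons b.1 (QP.castSrc b.2.1.symm (QP.cons pt' g hg)),
              QP.cons (QP.nil (Q.s b.1)) b.1 rfl,
              okb_of γ hα (QP.cons pt' g hg) b, dgb b⟩ : Lam Q asc (l + 1))
              (V0 k Q (Q.t g))))
          = ∑ b : {b : Q.E // Q.t b = Q.t γ ∧ b ≠ γ},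
              emb ((l + 1) + 1) (⟨Q.s b.1, jmid, Q.t b.1,
                QP.preCons b.1 (QP.castSrc b.2.1.symm pt'),
                QP.cons (QP.nil (Q.s b.1)) b.1 rfl,
                okb_of γ hα pt' b, dgXb2 b⟩ : Lam Q asc ((l + 1) + 1)) (VA k Q g hg)
          from Finset.sum_congr rfl fun b _ => by
            rw [show emb (l + 1) (⟨Q.s b.1, Q.t g, Q.t b.1,
                QP.preCons b.1 (QP.castSrc b.2.1.symm (QP.cons pt' g hg)),
                QP.cons (QP.nil (Q.s b.1)) b.1 rfl,
                okb_of γ hα (QP.cons pt' g hg) b, dgb b⟩ : Lam Q asc (l + 1))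
                (V0 k Q (Q.t g))
              = emb (l + 1) (⟨Q.s b.1, Q.t g, Q.t b.1,
                QP.cons (QP.preCons b.1 (QP.castSrc b.2.1.symm pt')) g hg,
                QP.cons (QP.nil (Q.s b.1)) b.1 rfl, okXb b, dgXb b⟩ :
                Lam Q asc (l + 1)) (V0 k Q (Q.t g))
              from emb_congr rfl rfl rfl
                (heq_of_eq (by rw [QP.castSrc_cons]; rfl)) (HEq.refl _) (HEq.refl _),
              D2 hδT hδ (l + 1) (Q.s b.1) jmid (Q.t b.1)
                (QP.preCons b.1 (QP.castSrc b.2.1.symm pt')) g hg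
                (QP.cons (QP.nil (Q.s b.1)) b.1 rfl) (okXb b) (dgXb b)
                (okb_of γ hα pt' b) (dgXb2 b)]]
      have okP : AssocPair Q asc (QP.cons (QP.preCons γ pt') g hg)
          (QP.nil (Q.s γ)) := assocPair_nil_right _
      have dgP : (((QP.nil (Q.s γ)).length : ℤ))
          - (((QP.cons (QP.preCons γ pt') g hg).length : ℤ)) = l := by
        simp only [QP.length, QP.length_preCons] at dg ⊢; push_cast at dg ⊢; omega
      have dgP2 : (((QP.nil (Q.s γ)).length : ℤ))
          - (((QP.preCons γ pt').length : ℤ)) = l + 1 := by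
        simp only [QP.length, QP.length_preCons] at dg ⊢; push_cast at dg ⊢; omega
      rw [show emb l (⟨Q.s γ, Q.t g, Q.s γ, QP.preCons γ (QP.cons pt' g hg),
            QP.nil (Q.s γ), ok, dg⟩ : Lam Q asc l) (V0 k Q (Q.t g))
          = emb l (⟨Q.s γ, Q.t g, Q.s γ, QP.cons (QP.preCons γ pt') g hg,
            QP.nil (Q.s γ), okP, dgP⟩ : Lam Q asc l) (V0 k Q (Q.t g))
          from emb_congr rfl rfl rfl (heq_of_eq (QP.preCons_cons γ pt' g hg))
            (HEq.refl _) (HEq.refl _),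
        D2 hδT hδ l (Q.s γ) jmid (Q.s γ) (QP.preCons γ pt') g hg (QP.nil (Q.s γ))
          okP dgP (assocPair_nil_right _) dgP2,
        hF.fa_assoc γ hα jmid pt' (assocPair_nil_right _) (l + 1) dgP2
          (assocPair_nil_right _) dgX (okb_of γ hα pt') dgXb2]
  · have okWgen : ∀ {jj : Q.V} (r : QP Q (Q.t γ) jj) (hsb : Q.s α = Q.s γ),
        AssocPair Q asc (QP.preCons γ r) (QP.cons (QP.nil (Q.s γ)) α hsb) := by
      intro jj r hsb x hx hq hass
      rw [QP.firstArrow_preCons] at hx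
      obtain rfl : γ = x := by injection hx
      have hαγ : α = γ := by simpa [QP.firstArrow] using hq
      exact hCγ ⟨hαγ.symm, by rw [hαγ]; exact hass⟩
    by_cases hsb : Q.s α = Q.s γ
    · cases pt with
      | nil =>
        have dgW : (((QP.cons (QP.nil (Q.s γ)) α hsb).length : ℤ))
            - (((QP.preCons γ (QP.nil (Q.t γ))).length : ℤ)) = l + 1 := by
          simp only [QP.length, QP.length_preCons] at dg ⊢; push_cast at dg ⊢; omega
        have okW2 : AssocPair Q asc (QP.cons (QP.nil (Q.s γ)) γ rfl)
            (QP.cons (QP.nil (Q.s γ)) α hsb) := by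
          intro x hx hq hass
          have hγx : γ = x := by simpa [QP.firstArrow] using hx
          have hαx : α = x := by simpa [QP.firstArrow] using hq
          exact hCγ ⟨hγx.trans hαx.symm, by rw [hαx]; exact hass⟩
        have dgW2 : (((QP.cons (QP.nil (Q.s γ)) α hsb).length : ℤ))
            - (((QP.cons (QP.nil (Q.s γ)) γ rfl).length : ℤ)) = l + 1 := by
          simp only [QP.length, QP.length_preCons] at dg ⊢; push_cast at dg ⊢; omega
        have dgW3 : (((QP.cons (QP.nil (Q.s γ)) α hsb).length : ℤ))
            - (((QP.nil (Q.s γ)).length : ℤ)) = (l + 1) + 1 := by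
          simp only [QP.length, QP.length_preCons] at dg ⊢; push_cast at dg ⊢; omega
        have okM : AssocPair Q asc (QP.cons (QP.nil (Q.s γ)) γ rfl)
            (QP.nil (Q.s γ)) := assocPair_nil_right _
        have dgM : (((QP.nil (Q.s γ)).length : ℤ))
            - (((QP.cons (QP.nil (Q.s γ)) γ rfl).length : ℤ)) = l := by
          simp only [QP.length, QP.length_preCons] at dg ⊢; push_cast at dg ⊢; omega
        have dgM2 : (((QP.nil (Q.s γ)).length : ℤ))
            - (((QP.nil (Q.s γ)).length : ℤ)) = l + 1 := by
          simp only [QP.length, QP.length_preCons] at dg ⊢; push_cast at dg ⊢; omega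
        rw [hF.fa_ext α l (⟨Q.s γ, Q.t γ, Q.s γ, QP.preCons γ (QP.nil (Q.t γ)),
            QP.nil (Q.s γ), ok, dg⟩ : Lam Q asc l) (V0 k Q (Q.t γ))
            (hC_pre hCγ l _ (QP.firstArrow_preCons γ _)) hsb (okWgen _ hsb) dgW,
          show emb (l + 1) (⟨Q.s γ, Q.t γ, Q.t α, QP.preCons γ (QP.nil (Q.t γ)),
            QP.cons (QP.nil (Q.s γ)) α hsb, okWgen _ hsb, dgW⟩ : Lam Q asc (l + 1))
            (V0 k Q (Q.t γ))
          = emb (l + 1) (⟨Q.s γ, Q.t γ, Q.t α, QP.cons (QP.nil (Q.s γ)) γ rfl,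
            QP.cons (QP.nil (Q.s γ)) α hsb, okW2, dgW2⟩ : Lam Q asc (l + 1))
            (V0 k Q (Q.t γ))
          from emb_congr rfl rfl rfl (heq_of_eq (QP.preCons_nil γ)) (HEq.refl _)
            (HEq.refl _),
          D2 hδT hδ (l + 1) (Q.s γ) _ (Q.t α) (QP.nil (Q.s γ)) γ rfl
            (QP.cons (QP.nil (Q.s γ)) α hsb) okW2 dgW2 (assocPair_nil_left _) dgW3,
          show emb l (⟨Q.s γ, Q.t γ, Q.s γ, QP.preCons γ (QP.nil (Q.t γ)),
            QP.nil (Q.s γ), ok, dg⟩ : Lam Q asc l) (V0 k Q (Q.t γ))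
          = emb l (⟨Q.s γ, Q.t γ, Q.s γ, QP.cons (QP.nil (Q.s γ)) γ rfl,
            QP.nil (Q.s γ), okM, dgM⟩ : Lam Q asc l) (V0 k Q (Q.t γ))
          from emb_congr rfl rfl rfl (heq_of_eq (QP.preCons_nil γ)) (HEq.refl _)
            (HEq.refl _),
          D2 hδT hδ l (Q.s γ) _ (Q.s γ) (QP.nil (Q.s γ)) γ rfl (QP.nil (Q.s γ))
            okM dgM (assocPair_nil_left _) dgM2,
          hF.fa_ext α (l + 1) (⟨Q.s γ, Q.s γ, Q.s γ, QP.nil (Q.s γ),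
            QP.nil (Q.s γ), assocPair_nil_left _, dgM2⟩ : Lam Q asc (l + 1))
            (VA k Q γ rfl) (hC_nil (l + 1) _ (by simp [QP.firstArrow])) hsb
            (assocPair_nil_left _) dgW3]
      | @cons jmid pt' g hg =>
        have okW4 : AssocPair Q asc (QP.cons (QP.preCons γ pt') g hg)
            (QP.cons (QP.nil (Q.s γ)) α hsb) := by
          intro x hx hq hass
          have hγx : γ = x := by
            simpa [QP.firstArrow, QP.firstArrow_preCons] using hx
          have hαx : α = x := by simpa [QP.firstArrow] using hq
          exact hCγ ⟨hγx.trans hαx.symm, by rw [hαx]; exact hass⟩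
        have dgW : (((QP.cons (QP.nil (Q.s γ)) α hsb).length : ℤ))
            - (((QP.preCons γ (QP.cons pt' g hg)).length : ℤ)) = l + 1 := by
          simp only [QP.length, QP.length_preCons] at dg ⊢; push_cast at dg ⊢; omega
        have dgW4 : (((QP.cons (QP.nil (Q.s γ)) α hsb).length : ℤ))
            - (((QP.cons (QP.preCons γ pt') g hg).length : ℤ)) = l + 1 := by
          simp only [QP.length, QP.length_preCons] at dg ⊢; push_cast at dg ⊢; omega
        have dgW5 : (((QP.cons (QP.nil (Q.s γ)) α hsb).length : ℤ))
            - (((QP.preCons γ pt').length : ℤ)) = (l + 1) + 1 := by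
          simp only [QP.length, QP.length_preCons] at dg ⊢; push_cast at dg ⊢; omega
        have okP : AssocPair Q asc (QP.cons (QP.preCons γ pt') g hg)
            (QP.nil (Q.s γ)) := assocPair_nil_right _
        have dgP : (((QP.nil (Q.s γ)).length : ℤ))
            - (((QP.cons (QP.preCons γ pt') g hg).length : ℤ)) = l := by
          simp only [QP.length, QP.length_preCons] at dg ⊢; push_cast at dg ⊢; omega
        have dgP2 : (((QP.nil (Q.s γ)).length : ℤ))
            - (((QP.preCons γ pt').length : ℤ)) = l + 1 := by
          simp only [QP.length, QP.length_preCons] at dg ⊢; push_cast at dg ⊢; omega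
        rw [hF.fa_ext α l (⟨Q.s γ, Q.t g, Q.s γ, QP.preCons γ (QP.cons pt' g hg),
            QP.nil (Q.s γ), ok, dg⟩ : Lam Q asc l) (V0 k Q (Q.t g))
            (hC_pre hCγ l _ (QP.firstArrow_preCons γ _)) hsb (okWgen _ hsb) dgW,
          show emb (l + 1) (⟨Q.s γ, Q.t g, Q.t α, QP.preCons γ (QP.cons pt' g hg),
            QP.cons (QP.nil (Q.s γ)) α hsb, okWgen _ hsb, dgW⟩ : Lam Q asc (l + 1))
            (V0 k Q (Q.t g))
          = emb (l + 1) (⟨Q.s γ, Q.t g, Q.t α, QP.cons (QP.preCons γ pt') g hg,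
            QP.cons (QP.nil (Q.s γ)) α hsb, okW4, dgW4⟩ : Lam Q asc (l + 1))
            (V0 k Q (Q.t g))
          from emb_congr rfl rfl rfl (heq_of_eq (QP.preCons_cons γ pt' g hg))
            (HEq.refl _) (HEq.refl _),
          D2 hδT hδ (l + 1) (Q.s γ) jmid (Q.t α) (QP.preCons γ pt') g hg
            (QP.cons (QP.nil (Q.s γ)) α hsb) okW4 dgW4 (okWgen pt' hsb) dgW5,
          show emb l (⟨Q.s γ, Q.t g, Q.s γ, QP.preCons γ (QP.cons pt' g hg),
            QP.nil (Q.s γ), ok, dg⟩ : Lam Q asc l) (V0 k Q (Q.t g))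
          = emb l (⟨Q.s γ, Q.t g, Q.s γ, QP.cons (QP.preCons γ pt') g hg,
            QP.nil (Q.s γ), okP, dgP⟩ : Lam Q asc l) (V0 k Q (Q.t g))
          from emb_congr rfl rfl rfl (heq_of_eq (QP.preCons_cons γ pt' g hg))
            (HEq.refl _) (HEq.refl _),
          D2 hδT hδ l (Q.s γ) jmid (Q.s γ) (QP.preCons γ pt') g hg (QP.nil (Q.s γ))
            okP dgP (assocPair_nil_right _) dgP2,
          hF.fa_ext α (l + 1) (⟨Q.s γ, jmid, Q.s γ, QP.preCons γ pt',
            QP.nil (Q.s γ), assocPair_nil_right _, dgP2⟩ : Lam Q asc (l + 1))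
            (VA k Q g hg) (hC_pre hCγ (l + 1) _ (QP.firstArrow_preCons γ _)) hsb
            (okWgen pt' hsb) dgW5]
    · rw [hF.fa_zero α l (⟨Q.s γ, i, Q.s γ, QP.preCons γ pt, QP.nil (Q.s γ), ok, dg⟩ :
        Lam Q asc l) (V0 k Q i) (hC_pre hCγ l _ (QP.firstArrow_preCons γ _)) hsb,
        map_zero]
      cases pt with
      | nil =>
        have okM : AssocPair Q asc (QP.cons (QP.nil (Q.s γ)) γ rfl)
            (QP.nil (Q.s γ)) := assocPair_nil_right _
        have dgM : (((QP.nil (Q.s γ)).length : ℤ))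
            - (((QP.cons (QP.nil (Q.s γ)) γ rfl).length : ℤ)) = l := by
          simp only [QP.length, QP.length_preCons] at dg ⊢; push_cast at dg ⊢; omega
        have dgM2 : (((QP.nil (Q.s γ)).length : ℤ))
            - (((QP.nil (Q.s γ)).length : ℤ)) = l + 1 := by
          simp only [QP.length, QP.length_preCons] at dg ⊢; push_cast at dg ⊢; omega
        rw [show emb l (⟨Q.s γ, Q.t γ, Q.s γ, QP.preCons γ (QP.nil (Q.t γ)),
            QP.nil (Q.s γ), ok, dg⟩ : Lam Q asc l) (V0 k Q (Q.t γ))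
          = emb l (⟨Q.s γ, Q.t γ, Q.s γ, QP.cons (QP.nil (Q.s γ)) γ rfl,
            QP.nil (Q.s γ), okM, dgM⟩ : Lam Q asc l) (V0 k Q (Q.t γ))
          from emb_congr rfl rfl rfl (heq_of_eq (QP.preCons_nil γ)) (HEq.refl _)
            (HEq.refl _),
          D2 hδT hδ l (Q.s γ) _ (Q.s γ) (QP.nil (Q.s γ)) γ rfl (QP.nil (Q.s γ))
            okM dgM (assocPair_nil_left _) dgM2]
        exact (hF.fa_zero α (l + 1) (⟨Q.s γ, Q.s γ, Q.s γ, QP.nil (Q.s γ),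
          QP.nil (Q.s γ), assocPair_nil_left _, dgM2⟩ : Lam Q asc (l + 1))
          (VA k Q γ rfl) (hC_nil (l + 1) _ (by simp [QP.firstArrow])) hsb).symm
      | @cons jmid pt' g hg =>
        have okP : AssocPair Q asc (QP.cons (QP.preCons γ pt') g hg)
            (QP.nil (Q.s γ)) := assocPair_nil_right _
        have dgP : (((QP.nil (Q.s γ)).length : ℤ))
            - (((QP.cons (QP.preCons γ pt') g hg).length : ℤ)) = l := by
          simp only [QP.length, QP.length_preCons] at dg ⊢; push_cast at dg ⊢; omega
        have dgP2 : (((QP.nil (Q.s γ)).length : ℤ))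
            - (((QP.preCons γ pt').length : ℤ)) = l + 1 := by
          simp only [QP.length, QP.length_preCons] at dg ⊢; push_cast at dg ⊢; omega
        rw [show emb l (⟨Q.s γ, Q.t g, Q.s γ, QP.preCons γ (QP.cons pt' g hg),
            QP.nil (Q.s γ), ok, dg⟩ : Lam Q asc l) (V0 k Q (Q.t g))
          = emb l (⟨Q.s γ, Q.t g, Q.s γ, QP.cons (QP.preCons γ pt') g hg,
            QP.nil (Q.s γ), okP, dgP⟩ : Lam Q asc l) (V0 k Q (Q.t g))
          from emb_congr rfl rfl rfl (heq_of_eq (QP.preCons_cons γ pt' g hg))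
            (HEq.refl _) (HEq.refl _),
          D2 hδT hδ l (Q.s γ) jmid (Q.s γ) (QP.preCons γ pt') g hg (QP.nil (Q.s γ))
            okP dgP (assocPair_nil_right _) dgP2]
        exact (hF.fa_zero α (l + 1) (⟨Q.s γ, jmid, Q.s γ, QP.preCons γ pt',
          QP.nil (Q.s γ), assocPair_nil_right _, dgP2⟩ : Lam Q asc (l + 1))
          (VA k Q g hg) (hC_pre hCγ (l + 1) _ (QP.firstArrow_preCons γ _)) hsb).symm

end CommA3
section CommA4
variable {k : Type} [Field k] {Q : FQ} {asc : ∀ i : Q.V, (∃ e, Q.t e = i) → Q.E}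
variable {δ : ∀ l : ℤ, PL k Q asc l →ₗ[AlgA k Q] PL k Q asc (l + 1)}
variable {δT : PT k Q asc →ₗ[AlgA k Q] PT k Q asc}
variable {Tv : Q.V → PT k Q asc →ₗ[AlgA k Q] PT k Q asc}
variable {Ta Ts : Q.E → PT k Q asc →ₗ[AlgA k Q] PT k Q asc}

lemma comm_a
    (hδT : ∀ (l : ℤ) (v : PL k Q asc l),
      δT (DFinsupp.single l v) = DFinsupp.single (l + 1) (δ l v))
    (hδ : IsLeavittDiff k Q asc δ)
    (hF : ActionFormulas k Q asc (fun j u => Tv j u) (fun e u => Ta e u)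
      (fun e u => Ts e u))
    (α : Q.E) (l : ℤ) (x : Lam Q asc l) :
    δT (Ta α (emb l x (V0 k Q x.i))) = Ta α (δT (emb l x (V0 k Q x.i))) := by
  obtain ⟨a, i, b, p, q, ok, dg⟩ := x
  cases q with
  | cons qh α₁ he => exact comm_a_qcons hδT hδ hF α l a i _ p qh α₁ he ok dg
  | nil =>
    cases p with
    | nil => exact comm_a_qnil_pnil hδT hδ hF α l a ok dg
    | @cons jmid p0 f hf =>
      obtain ⟨γ, h, pt, hp⟩ := QP.cons_decomp p0 f hf
      subst h
      have hp' : QP.cons p0 f hf = QP.preCons γ pt := by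
        rw [hp]
        exact QP.castSrc_self _ _
      have dg2 : (((QP.nil (Q.s γ)).length : ℤ))
          - (((QP.preCons γ pt).length : ℤ)) = l := by
        rw [← hp']; exact dg
      have ok2 : AssocPair Q asc (QP.preCons γ pt) (QP.nil (Q.s γ)) := hp' ▸ ok
      rw [show emb l (⟨Q.s γ, Q.t f, Q.s γ, QP.cons p0 f hf, QP.nil (Q.s γ), ok, dg⟩ :
            Lam Q asc l) (V0 k Q (Q.t f))
          = emb l (⟨Q.s γ, Q.t f, Q.s γ, QP.preCons γ pt, QP.nil (Q.s γ), ok2, dg2⟩ :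
            Lam Q asc l) (V0 k Q (Q.t f))
          from emb_congr rfl rfl rfl (heq_of_eq hp') (HEq.refl _) (HEq.refl _)]
      exact comm_a_qnil_ppre hδT hδ hF α γ l (Q.t f) pt ok2 dg2

end CommA4
/-- **The projective Leavitt complex is a dg `A`-`B`-bimodule (Proposition 4.6).**
Let `Q` be a finite quiver without sources, `A = kQ/J²`, and `B = L_k(Q^op)` (graded by
path degree, with trivial differential).  Suppose `Tv`, `Ta`, `Ts` are `A`-linear
operators on `⊕_l P^l` giving the right actions of the generators `e_j`, `β^op`,
`(β^op)*` of `B` (homogeneous of degrees `0`, `1`, `-1` respectively) via the defining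
formulas.  Then the total differential `δ` of the projective Leavitt complex commutes
with each of these actions, `δ(x ζ_{(p,q)} · b) = δ(x ζ_{(p,q)}) · b`; hence `P•` is a
dg `A`-`B`-bimodule. -/
theorem projective_leavitt_complex_dg_bimodule (k : Type) [Field k]
    (Q : FQ) (hQ : Q.NoSources)
    (asc : ∀ i : Q.V, (∃ e, Q.t e = i) → Q.E)
    (hasc : ∀ (i : Q.V) (h : ∃ e, Q.t e = i), Q.t (asc i h) = i)
    (δ : ∀ l : ℤ, PL k Q asc l →ₗ[AlgA k Q] PL k Q asc (l + 1))
    (hδ : IsLeavittDiff k Q asc δ)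
    (Tv : Q.V → PT k Q asc →ₗ[AlgA k Q] PT k Q asc)
    (Ta Ts : Q.E → PT k Q asc →ₗ[AlgA k Q] PT k Q asc)
    (hF : ActionFormulas k Q asc (fun j u => Tv j u) (fun e u => Ta e u)
      (fun e u => Ts e u)) :
    ∀ δT : PT k Q asc →ₗ[AlgA k Q] PT k Q asc,
      (∀ (l : ℤ) (v : PL k Q asc l),
        δT (DFinsupp.single l v) = DFinsupp.single (l + 1) (δ l v)) →
      (∀ j : Q.V, δT.comp (Tv j) = (Tv j).comp δT) ∧
      (∀ e : Q.E, δT.comp (Ta e) = (Ta e).comp δT) ∧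
      (∀ e : Q.E, δT.comp (Ts e) = (Ts e).comp δT) := by
  intro δT hδT
  exact ⟨fun j => reduce_comm δ δT (Tv j) hδT (fun l x => comm_v hδT hδ hF j l x),
    fun e => reduce_comm δ δT (Ta e) hδT (fun l x => comm_a hδT hδ hF e l x),
    fun e => reduce_comm δ δT (Ts e) hδT (fun l x => comm_s hδT hδ hF e l x)⟩
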